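/- arXiv:1508.04905 — 8 statements merged into one kernel-verified Lean document; each statement's English description precedes it below -/
import Mathlib

section
/- Let N be a standard Gaussian random variable. Then for every real q > 2, E[|N|^q] ≤ √2 · e · √q · (q/e)^(q/2). -/
open MeasureTheory ProbabilityTheory Real

/-- Key pointwise bound: `u * exp (-u) ≤ exp (-1)` for all real `u`. -/
lemma aux_u_exp_neg_u_le (u : ℝ) : u * Real.exp (-u) ≤ Real.exp (-1) := by
  have h := Real.add_one_le_exp (u - 1)
  have h2 : u ≤ Real.exp (u - 1) := by linarith
  calc u * Real.exp (-u) ≤ Real.exp (u - 1) * Real.exp (-u) := by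
        apply mul_le_mul_of_nonneg_right h2 (Real.exp_nonneg _)
    _ = Real.exp (-1) := by rw [← Real.exp_add]; ring_nf
  
/-- Pointwise bound: `t^q * exp (-a*t^2/2) ≤ (q/(a*e))^(q/2)` for `t ≥ 0`, `a,q > 0`. -/
lemma aux_pointwise (q a t : ℝ) (hq : 0 < q) (ha : 0 < a) (ht : 0 ≤ t) :
    t ^ q * Real.exp (-(a * t ^ 2 / 2)) ≤ (q / (a * Real.exp 1)) ^ (q / 2) := by
  set u : ℝ := a * t ^ 2 / q with hu
  have hu0 : 0 ≤ u := by positivity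
  have ht2 : t ^ 2 = q * u / a := by field_simp [hu]; rw [hu]; field_simp
  have htq : t ^ q = (q / a * u) ^ (q / 2) := by
    have : t ^ q = (t ^ 2) ^ (q / 2) := by
      rw [← Real.rpow_natCast t 2, ← Real.rpow_mul ht]
      norm_num
      congr 1
      ring
    rw [this, ht2]
    congr 1
    ring
  have hexp : Real.exp (-(a * t ^ 2 / 2)) = (Real.exp (-u)) ^ (q / 2) := by
    rw [← Real.exp_mul]
    congr 1
    rw [ht2]
    field_simp
  rw [htq, hexp, ← Real.mul_rpow (by positivity) (Real.exp_nonneg _)]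
  have hbase : q / a * u * Real.exp (-u) ≤ q / (a * Real.exp 1) := by
    have := aux_u_exp_neg_u_le u
    have hqa : 0 ≤ q / a := by positivity
    calc q / a * u * Real.exp (-u) = q / a * (u * Real.exp (-u)) := by ring
      _ ≤ q / a * Real.exp (-1) := by
          exact mul_le_mul_of_nonneg_left this hqa
      _ = q / (a * Real.exp 1) := by
          rw [Real.exp_neg]
          field_simp
  exact Real.rpow_le_rpow (by positivity) hbase (by positivity)

/-- Moment bound for the standard Gaussian: for every `q > 2`,
`E[|N|^q] ≤ √2 · e · √q · (q/e)^(q/2)`. -/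
theorem gaussian_abs_moment_bound (q : ℝ) (hq : 2 < q) :
    ∫ x, |x| ^ q ∂(gaussianReal 0 1) ≤
      Real.sqrt 2 * Real.exp 1 * Real.sqrt q * (q / Real.exp 1) ^ (q / 2) := by
  have hq0 : (0:ℝ) < q := by linarith
  have hq1 : (0:ℝ) < q - 1 := by linarith
  have hπ : (0:ℝ) < π := Real.pi_pos
  set a : ℝ := (q - 1) / q with ha_def
  have ha : 0 < a := by positivity
  set C : ℝ := (q / (a * Real.exp 1)) ^ (q / 2) with hC_def
  have hC0 : 0 ≤ C := Real.rpow_nonneg (by positivity) _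
  -- Step 1: express the integral against volume
  have hconv : ∫ x, |x| ^ q ∂(gaussianReal 0 1)
      = ∫ x, gaussianPDFReal 0 1 x * |x| ^ q := by
    rw [gaussianReal_of_var_ne_zero _ one_ne_zero]
    have : gaussianPDF 0 1 = fun x => ((Real.toNNReal (gaussianPDFReal 0 1 x) : NNReal) : ENNReal) := by
      ext x; rfl
    rw [this]
    rw [integral_withDensity_eq_integral_smul
      ((measurable_gaussianPDFReal 0 1).real_toNNReal) (fun x => |x| ^ q)]
    congr 1
    ext x
    rw [NNReal.smul_def, smul_eq_mul, Real.coe_toNNReal _ (gaussianPDFReal_nonneg 0 1 x)]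
  rw [hconv]
  -- Step 2: pointwise bound
  have hpoint : ∀ x : ℝ, gaussianPDFReal 0 1 x * |x| ^ q
      ≤ (Real.sqrt (2 * π))⁻¹ * C * Real.exp (-(1 / (2 * q)) * x ^ 2) := by
    intro x
    have hx2 : |x| ^ 2 = x ^ 2 := sq_abs x
    have hsplit : Real.exp (-x ^ 2 / 2)
        = Real.exp (-(a * |x| ^ 2 / 2)) * Real.exp (-(1 / (2 * q)) * x ^ 2) := by
      rw [← Real.exp_add, hx2]
      congr 1
      rw [ha_def]
      field_simp [ha_def]
      ring
    have hpdf : gaussianPDFReal 0 1 x = (Real.sqrt (2 * π))⁻¹ * Real.exp (-x ^ 2 / 2) := by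
      simp [gaussianPDFReal]
    rw [hpdf, hsplit]
    have hb := aux_pointwise q a |x| hq0 ha (abs_nonneg x)
    calc (Real.sqrt (2 * π))⁻¹ * (Real.exp (-(a * |x| ^ 2 / 2)) * Real.exp (-(1 / (2 * q)) * x ^ 2)) * |x| ^ q
        = (Real.sqrt (2 * π))⁻¹ * (|x| ^ q * Real.exp (-(a * |x| ^ 2 / 2))) * Real.exp (-(1 / (2 * q)) * x ^ 2) := by ring
      _ ≤ (Real.sqrt (2 * π))⁻¹ * C * Real.exp (-(1 / (2 * q)) * x ^ 2) := by
          apply mul_le_mul_of_nonneg_right _ (Real.exp_nonneg _)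
          apply mul_le_mul_of_nonneg_left hb (by positivity)
  -- Step 3: integrate majorant
  have hint : Integrable (fun x : ℝ => (Real.sqrt (2 * π))⁻¹ * C * Real.exp (-(1 / (2 * q)) * x ^ 2)) := by
    exact (integrable_exp_neg_mul_sq (by positivity)).const_mul _
  have hmono : ∫ x, gaussianPDFReal 0 1 x * |x| ^ q
      ≤ ∫ x, (Real.sqrt (2 * π))⁻¹ * C * Real.exp (-(1 / (2 * q)) * x ^ 2) := by
    apply integral_mono_of_nonneg
    · filter_upwards with x
      exact mul_nonneg (gaussianPDFReal_nonneg 0 1 x) (by positivity)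
    · exact hint
    · filter_upwards with x
      exact hpoint x
  have hval : ∫ x : ℝ, (Real.sqrt (2 * π))⁻¹ * C * Real.exp (-(1 / (2 * q)) * x ^ 2)
      = C * Real.sqrt q := by
    rw [integral_const_mul, integral_gaussian]
    rw [show π / (1 / (2 * q)) = 2 * π * q by field_simp]
    rw [Real.sqrt_mul (by positivity : (0:ℝ) ≤ 2 * π) q]
    have hne : Real.sqrt (2 * π) ≠ 0 := by positivity
    field_simp
  -- Step 4: final estimate on the constant
  have hCsplit : C = (q / Real.exp 1) ^ (q / 2) * (q / (q - 1)) ^ (q / 2) := by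
    rw [hC_def, ← Real.mul_rpow (by positivity) (by positivity)]
    congr 1
    rw [ha_def]
    field_simp [ha_def]
  have hfactor : (q / (q - 1)) ^ (q / 2) ≤ Real.exp 1 := by
    have hlog : Real.log (q / (q - 1)) ≤ 1 / (q - 1) := by
      rw [Real.log_le_iff_le_exp (by positivity)]
      have := Real.add_one_le_exp (1 / (q - 1))
      have heq : q / (q - 1) = 1 / (q - 1) + 1 := by field_simp; ring
      linarith
    have h2 : q / 2 * Real.log (q / (q - 1)) ≤ 1 := by
      have h3 : q / 2 * Real.log (q / (q - 1)) ≤ q / 2 * (1 / (q - 1)) :=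
        mul_le_mul_of_nonneg_left hlog (by positivity)
      have h4 : q / 2 * (1 / (q - 1)) ≤ 1 := by
        rw [div_mul_div_comm, div_le_one (by positivity)]
        linarith
      linarith
    calc (q / (q - 1)) ^ (q / 2) = Real.exp (Real.log (q / (q - 1)) * (q / 2)) := by
          rw [Real.rpow_def_of_pos (by positivity)]
      _ ≤ Real.exp 1 := by
          apply Real.exp_le_exp.mpr
          linarith [h2]
  have hfinal : C * Real.sqrt q ≤ Real.sqrt 2 * Real.exp 1 * Real.sqrt q * (q / Real.exp 1) ^ (q / 2) := by
    rw [hCsplit]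
    have hqe : (0:ℝ) ≤ (q / Real.exp 1) ^ (q / 2) := Real.rpow_nonneg (by positivity) _
    have h1 : (1:ℝ) ≤ Real.sqrt 2 := by
      rw [show (1:ℝ) = Real.sqrt 1 by simp]
      exact Real.sqrt_le_sqrt (by norm_num)
    calc (q / Real.exp 1) ^ (q / 2) * (q / (q - 1)) ^ (q / 2) * Real.sqrt q
        ≤ (q / Real.exp 1) ^ (q / 2) * Real.exp 1 * Real.sqrt q := by
          apply mul_le_mul_of_nonneg_right _ (Real.sqrt_nonneg q)
          exact mul_le_mul_of_nonneg_left hfactor hqe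
      _ = 1 * ((q / Real.exp 1) ^ (q / 2) * Real.exp 1 * Real.sqrt q) := by ring
      _ ≤ Real.sqrt 2 * ((q / Real.exp 1) ^ (q / 2) * Real.exp 1 * Real.sqrt q) := by
          apply mul_le_mul_of_nonneg_right h1
          positivity
      _ = Real.sqrt 2 * Real.exp 1 * Real.sqrt q * (q / Real.exp 1) ^ (q / 2) := by ring
  calc ∫ x, gaussianPDFReal 0 1 x * |x| ^ q
      ≤ ∫ x, (Real.sqrt (2 * π))⁻¹ * C * Real.exp (-(1 / (2 * q)) * x ^ 2) := hmono
    _ = C * Real.sqrt q := hval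
    _ ≤ _ := hfinal
end

section
/- Let S be a binomial random variable with parameters k and 1/2 (k a positive integer). Then for every real q > 3, E[|S − E[S]|^q] ≤ 4√e · √q · (qk/(2e))^(q/2). -/
open MeasureTheory ProbabilityTheory Real
open Finset ENNReal

namespace BinomialMomentAux


lemma sum_choose_rec (k : ℕ) (f : ℕ → ℝ) :
    ∑ s ∈ range (k+2), ((k+1).choose s : ℝ) * f s
      = ∑ s ∈ range (k+1), (k.choose s : ℝ) * (f s + f (s+1)) := by
  have h1 : ∑ s ∈ range (k+2), ((k+1).choose s : ℝ) * f s
      = ∑ s ∈ range (k+1), ((k+1).choose (s+1) : ℝ) * f (s+1) + ((k+1).choose 0 : ℝ) * f 0 :=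
    Finset.sum_range_succ' _ _
  have h2 : ∀ s, ((k+1).choose (s+1) : ℝ) = (k.choose s : ℝ) + (k.choose (s+1) : ℝ) := by
    intro s; rw [Nat.choose_succ_succ]; push_cast; ring
  rw [h1]
  have h3 : ∑ s ∈ range (k+2), (k.choose s : ℝ) * f s
      = ∑ s ∈ range (k+1), (k.choose (s+1) : ℝ) * f (s+1) + (k.choose 0 : ℝ) * f 0 :=
    Finset.sum_range_succ' _ _
  have h4 : ∑ s ∈ range (k+2), (k.choose s : ℝ) * f s
      = ∑ s ∈ range (k+1), (k.choose s : ℝ) * f s := by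
    rw [Finset.sum_range_succ, Nat.choose_succ_self]
    simp
  have h5 : ∑ s ∈ range (k+1), (k.choose (s+1) : ℝ) * f (s+1)
      = ∑ s ∈ range (k+1), (k.choose s : ℝ) * f s - (k.choose 0 : ℝ) * f 0 := by
    rw [← h4, h3]; ring
  simp only [h2, add_mul, Finset.sum_add_distrib, h5, mul_add]
  simp [Nat.choose_zero_right]
  ring

lemma even_odd_split (c : ℕ → ℝ) (m : ℕ) :
    ∑ j ∈ range (2*m+1), c j
      = ∑ i ∈ range (m+1), c (2*i) + ∑ i ∈ range m, c (2*i+1) := by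
  induction m with
  | zero => simp
  | succ n ih =>
    have h : 2*(n+1)+1 = (2*n+1) + 1 + 1 := by ring
    rw [h, Finset.sum_range_succ, Finset.sum_range_succ, ih,
      Finset.sum_range_succ (fun i => c (2*i)) (n+1), Finset.sum_range_succ (fun i => c (2*i+1)) n]
    have e2 : 2*n+1+1 = 2*(n+1) := by ring
    rw [e2]
    ring

lemma pair_expansion (x c : ℝ) (m : ℕ) :
    (x + c)^(2*m) + (x - c)^(2*m)
      = 2 * ∑ i ∈ range (m+1), ((2*m).choose (2*i) : ℝ) * x^(2*m-2*i) * c^(2*i) := by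
  rw [add_comm x c, sub_eq_add_neg, add_comm x (-c), add_pow, add_pow]
  rw [← Finset.sum_add_distrib]
  have key : ∀ j ∈ range (2*m+1),
      c ^ j * x ^ (2*m - j) * ((2*m).choose j : ℝ) + (-c) ^ j * x ^ (2*m - j) * ((2*m).choose j : ℝ)
        = (if Even j then 2 * (((2*m).choose j : ℝ) * x^(2*m-j) * c^j) else 0) := by
    intro j _
    rcases Nat.even_or_odd j with he | ho
    · rw [he.neg_pow, if_pos he]; ring
    · rw [ho.neg_pow, if_neg (Nat.not_even_iff_odd.mpr ho)]; ring
  rw [Finset.sum_congr rfl key, even_odd_split]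
  have h1 : ∀ i ∈ range (m+1), (if Even (2*i) then 2 * (((2*m).choose (2*i) : ℝ) * x^(2*m-2*i) * c^(2*i)) else 0)
      = 2 * (((2*m).choose (2*i) : ℝ) * x^(2*m-2*i) * c^(2*i)) := by
    intro i _; rw [if_pos (even_two_mul i)]
  have h2 : ∀ i ∈ range m, (if Even (2*i+1) then 2 * (((2*m).choose (2*i+1) : ℝ) * x^(2*m-(2*i+1)) * c^(2*i+1)) else 0)
      = 0 := by
    intro i _; rw [if_neg (by simp [Nat.even_add_one, parity_simps])]
  rw [Finset.sum_congr rfl h1, Finset.sum_congr rfl h2, Finset.mul_sum]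
  simp

lemma two_pow_fact_le (i : ℕ) : 2^i * i.factorial ≤ (2*i).factorial := by
  induction i with
  | zero => simp
  | succ n ih =>
    have h : 2*(n+1) = (2*n+1)+1 := by ring
    rw [h, Nat.factorial_succ, Nat.factorial_succ, Nat.factorial_succ]
    calc 2^(n+1) * ((n+1) * n.factorial) = (2*(n+1)) * (2^n * n.factorial) := by ring
    _ ≤ (2*(n+1)) * (2*n).factorial := Nat.mul_le_mul_left _ ih
    _ ≤ ((2*n+1+1) * ((2*n+1) * (2*n).factorial)) := by
        have : 2*(n+1) ≤ (2*n+1+1)*(2*n+1) := by nlinarith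
        calc (2*(n+1)) * (2*n).factorial ≤ ((2*n+1+1)*(2*n+1)) * (2*n).factorial :=
          Nat.mul_le_mul_right _ this
        _ = (2*n+1+1) * ((2*n+1) * (2*n).factorial) := by ring

lemma coeff_nat (m i : ℕ) (h : i ≤ m) :
    (2*m).choose (2*i) * (2*(m-i)).factorial * (2^i * m.factorial)
      ≤ m.choose i * (2*m).factorial * (m-i).factorial := by
  have h2 : 2*i ≤ 2*m := by omega
  have key : (2*m).choose (2*i) * (2*i).factorial * (2*m - 2*i).factorial = (2*m).factorial :=
    Nat.choose_mul_factorial_mul_factorial h2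
  have key2 : m.choose i * i.factorial * (m-i).factorial = m.factorial :=
    Nat.choose_mul_factorial_mul_factorial h
  have hsub : 2*(m-i) = 2*m - 2*i := by omega
  refine Nat.le_of_mul_le_mul_right ?_
    (Nat.mul_pos (Nat.factorial_pos (2*i)) (Nat.factorial_pos i))
  have e1 : (2*m).choose (2*i) * (2*(m-i)).factorial * (2^i * m.factorial) * ((2*i).factorial * i.factorial)
      = ((2*m).choose (2*i) * (2*i).factorial * (2*m - 2*i).factorial) * ((2^i * i.factorial) * m.factorial) := by
    rw [hsub]; ring
  have e2 : m.choose i * (2*m).factorial * (m-i).factorial * ((2*i).factorial * i.factorial)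
      = (m.choose i * i.factorial * (m-i).factorial) * ((2*m).factorial * (2*i).factorial) := by ring
  rw [e1, e2, key, key2]
  calc (2*m).factorial * (2^i * i.factorial * m.factorial)
      ≤ (2*m).factorial * ((2*i).factorial * m.factorial) :=
        Nat.mul_le_mul_left _ (Nat.mul_le_mul_right _ (two_pow_fact_le i))
    _ = m.factorial * ((2*m).factorial * (2*i).factorial) := by ring

noncomputable def A (m : ℕ) : ℝ := ((2*m).factorial : ℝ) / (2^m * m.factorial)

lemma A_nonneg (m : ℕ) : 0 ≤ A m := by
  unfold A; positivity

lemma coeff_real (m i : ℕ) (h : i ≤ m) :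
    ((2*m).choose (2*i) : ℝ) * A (m-i) * (1/4)^i ≤ (m.choose i : ℝ) * A m * (1/4)^i := by
  apply mul_le_mul_of_nonneg_right _ (by positivity)
  unfold A
  rw [mul_div_assoc', mul_div_assoc', div_le_div_iff₀ (by positivity) (by positivity)]
  have := coeff_nat m i h
  have hcast : ((2*m).choose (2*i) * (2*(m-i)).factorial * (2^i * m.factorial) : ℝ)
      ≤ (m.choose i * (2*m).factorial * (m-i).factorial : ℝ) := by exact_mod_cast this
  push_cast at hcast ⊢
  have hp : (2:ℝ)^m = 2^(m-i) * 2^i := by rw [← pow_add]; congr 1; omega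
  rw [hp]
  nlinarith [hcast, pow_pos (by norm_num : (0:ℝ) < 2) i, pow_pos (by norm_num : (0:ℝ) < 2) (m-i)]
lemma moment_bound (k : ℕ) : ∀ m : ℕ,
    ∑ s ∈ range (k+1), (k.choose s : ℝ) * ((s:ℝ) - k/2)^(2*m)
      ≤ 2^k * A m * ((k:ℝ)/4)^m := by
  induction k with
  | zero =>
    intro m
    match m with
    | 0 => simp [A]
    | m+1 => simp [A_nonneg]
  | succ k ih =>
    intro m
    have step1 : ∑ s ∈ range (k+2), ((k+1).choose s : ℝ) * ((s:ℝ) - (k+1)/2)^(2*m)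
        = ∑ s ∈ range (k+1), (k.choose s : ℝ) *
            (2 * ∑ i ∈ range (m+1), ((2*m).choose (2*i) : ℝ) * ((s:ℝ) - k/2)^(2*m-2*i) * (1/2)^(2*i)) := by
      rw [sum_choose_rec k (fun s => ((s:ℝ) - (k+1)/2)^(2*m))]
      apply Finset.sum_congr rfl
      intro s _
      congr 1
      have e1 : ((s:ℝ) - (k+1)/2) = ((s:ℝ) - k/2) - 1/2 := by push_cast; ring
      have e2 : (((s+1:ℕ):ℝ) - (k+1)/2) = ((s:ℝ) - k/2) + 1/2 := by push_cast; ring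
      rw [e1, e2, ← pair_expansion (((s:ℝ) - k/2)) (1/2) m]
      ring
    have hc : ((k+1 : ℕ) : ℝ) = (k:ℝ)+1 := by push_cast; ring
    rw [show k+1+1 = k+2 from rfl, hc, step1]
    -- swap sums
    have step2 : ∑ s ∈ range (k+1), (k.choose s : ℝ) *
            (2 * ∑ i ∈ range (m+1), ((2*m).choose (2*i) : ℝ) * ((s:ℝ) - k/2)^(2*m-2*i) * (1/2)^(2*i))
        = 2 * ∑ i ∈ range (m+1), ((2*m).choose (2*i) : ℝ) * (1/2)^(2*i) *
            (∑ s ∈ range (k+1), (k.choose s : ℝ) * ((s:ℝ) - k/2)^(2*m-2*i)) := by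
      simp only [Finset.mul_sum, Finset.sum_mul]
      rw [Finset.sum_comm]
      apply Finset.sum_congr rfl; intro s _
      apply Finset.sum_congr rfl; intro i _
      ring
    rw [step2]
    have hhalf : ∀ i : ℕ, ((1:ℝ)/2)^(2*i) = (1/4)^i := by
      intro i; rw [pow_mul]; norm_num
    have step3 : ∀ i ∈ range (m+1),
        ((2*m).choose (2*i) : ℝ) * (1/2)^(2*i) *
            (∑ s ∈ range (k+1), (k.choose s : ℝ) * ((s:ℝ) - k/2)^(2*m-2*i))
          ≤ (m.choose i : ℝ) * A m * (1/4)^i * (2^k * ((k:ℝ)/4)^(m-i)) := by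
      intro i hi
      have him : i ≤ m := Nat.lt_succ_iff.mp (Finset.mem_range.mp hi)
      have hexp : 2*m - 2*i = 2*(m-i) := by omega
      rw [hexp, hhalf i]
      calc ((2*m).choose (2*i) : ℝ) * (1/4)^i *
            (∑ s ∈ range (k+1), (k.choose s : ℝ) * ((s:ℝ) - k/2)^(2*(m-i)))
          ≤ ((2*m).choose (2*i) : ℝ) * (1/4)^i * (2^k * A (m-i) * ((k:ℝ)/4)^(m-i)) := by
            apply mul_le_mul_of_nonneg_left (ih (m-i)) (by positivity)
        _ = ((2*m).choose (2*i) : ℝ) * A (m-i) * (1/4)^i * (2^k * ((k:ℝ)/4)^(m-i)) := by ring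
        _ ≤ (m.choose i : ℝ) * A m * (1/4)^i * (2^k * ((k:ℝ)/4)^(m-i)) := by
            apply mul_le_mul_of_nonneg_right (coeff_real m i him) (by positivity)
    calc 2 * ∑ i ∈ range (m+1), ((2*m).choose (2*i) : ℝ) * (1/2)^(2*i) *
            (∑ s ∈ range (k+1), (k.choose s : ℝ) * ((s:ℝ) - k/2)^(2*m-2*i))
        ≤ 2 * ∑ i ∈ range (m+1), (m.choose i : ℝ) * A m * (1/4)^i * (2^k * ((k:ℝ)/4)^(m-i)) := by
          apply mul_le_mul_of_nonneg_left (Finset.sum_le_sum step3) (by norm_num)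
      _ = 2^(k+1) * A m * ∑ i ∈ range (m+1), ((1:ℝ)/4)^i * ((k:ℝ)/4)^(m-i) * (m.choose i : ℝ) := by
          rw [Finset.mul_sum, Finset.mul_sum]
          apply Finset.sum_congr rfl; intro i _; ring
      _ = 2^(k+1) * A m * (((k:ℝ)+1)/4)^m := by
          rw [← add_pow]
          ring_nf
    done


lemma fact_le_stirling : ∀ m : ℕ, 1 ≤ m →
    (m.factorial : ℝ) ≤ Real.exp 1 * m * ((m:ℝ)/Real.exp 1)^m := by
  intro m
  induction m with
  | zero => omega
  | succ n ih =>
    intro _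
    rcases Nat.eq_or_lt_of_le (Nat.one_le_iff_ne_zero.mpr (Nat.succ_ne_zero n)) with h1 | h1
    · -- n + 1 = 1
      have : n = 0 := by omega
      subst this
      have he := Real.exp_pos 1
      norm_num
    · have hn1 : 1 ≤ n := by omega
      have ihn := ih hn1
      have he := Real.exp_pos 1
      have hn0 : (0:ℝ) < n := by exact_mod_cast hn1
      -- key : exp 1 ≤ ((n+1)/n)^(n+1)
      have hkey : Real.exp 1 ≤ (((n:ℝ)+1)/n)^(n+1) := by
        have h2 : Real.exp (1/((n:ℝ)+1)) ≤ ((n:ℝ)+1)/n := by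
          have h3 := Real.add_one_le_exp (-(1/((n:ℝ)+1)))
          have h4 : (0:ℝ) < 1 - 1/((n:ℝ)+1) := by
            rw [sub_pos, div_lt_one (by positivity)]; linarith
          have h5 : -(1/((n:ℝ)+1)) + 1 = 1 - 1/((n:ℝ)+1) := by ring
          rw [h5] at h3
          have h6 : Real.exp (1/((n:ℝ)+1)) * Real.exp (-(1/((n:ℝ)+1))) = 1 := by
            rw [← Real.exp_add]; simp
          have h7 : (1 - 1/((n:ℝ)+1)) = (n:ℝ)/((n:ℝ)+1) := by
            field_simp; ring
          rw [h7] at h3 h4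
          calc Real.exp (1/((n:ℝ)+1)) = 1 / Real.exp (-(1/((n:ℝ)+1))) := by
                field_simp [← Real.exp_add]; exact h6
            _ ≤ 1 / ((n:ℝ)/((n:ℝ)+1)) := by
                apply one_div_le_one_div_of_le h4 h3
            _ = ((n:ℝ)+1)/n := by field_simp
        calc Real.exp 1 = Real.exp (((n:ℕ)+1) * (1/((n:ℝ)+1))) := by
              congr 1; push_cast; field_simp
          _ = Real.exp (1/((n:ℝ)+1)) ^ (n+1) := by
              rw [← Real.exp_nat_mul]; push_cast; ring_nf
          _ ≤ (((n:ℝ)+1)/n)^(n+1) := by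
              apply pow_le_pow_left₀ (le_of_lt (Real.exp_pos _)) h2
      have hkey2 : Real.exp 1 * (n:ℝ)^(n+1) ≤ ((n:ℝ)+1)^(n+1) := by
        have := mul_le_mul_of_nonneg_right hkey (le_of_lt (pow_pos hn0 (n+1)))
        rwa [div_pow, div_mul_cancel₀] at this
        exact ne_of_gt (pow_pos hn0 (n+1))
      have hmono : (n:ℝ) * ((n:ℝ)/Real.exp 1)^n ≤ (((n:ℝ)+1)/Real.exp 1)^(n+1) := by
        rw [div_pow, div_pow]
        have e1 : (n:ℝ) * ((n:ℝ)^n / Real.exp 1 ^n) = (n:ℝ)^(n+1) / Real.exp 1 ^ n := by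
          rw [pow_succ]; ring
        rw [e1, div_le_div_iff₀ (by positivity) (by positivity)]
        have e2 : Real.exp 1 ^ (n+1) = Real.exp 1 ^ n * Real.exp 1 := by ring
        rw [e2]
        nlinarith [hkey2, pow_pos (Real.exp_pos 1) n]
      have hc : ((n+1 : ℕ) : ℝ) = (n:ℝ)+1 := by push_cast; ring
      calc ((n+1).factorial : ℝ) = ((n:ℝ)+1) * (n.factorial : ℝ) := by
            rw [Nat.factorial_succ]; push_cast; ring
        _ ≤ ((n:ℝ)+1) * (Real.exp 1 * n * ((n:ℝ)/Real.exp 1)^n) := by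
            apply mul_le_mul_of_nonneg_left ihn (by positivity)
        _ = Real.exp 1 * ((n:ℝ)+1) * ((n:ℝ) * ((n:ℝ)/Real.exp 1)^n) := by ring
        _ ≤ Real.exp 1 * ((n:ℝ)+1) * ((((n:ℝ)+1)/Real.exp 1)^(n+1)) := by
            apply mul_le_mul_of_nonneg_left hmono (by positivity)
        _ = Real.exp 1 * ((n+1:ℕ):ℝ) * ((((n+1:ℕ):ℝ))/Real.exp 1)^(n+1) := by
            rw [hc]

lemma numeric_exp : Real.exp (2/11) ≤ 6/5 := by
  have h : Real.exp (2/11) ^ (11:ℕ) = Real.exp 2 := by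
    rw [← Real.exp_nat_mul]; norm_num
  have h2 : Real.exp 2 ≤ (6/5:ℝ)^(11:ℕ) := by
    have := Real.exp_one_lt_d9
    have e2 : Real.exp 2 = Real.exp 1 ^ (2:ℕ) := by
      rw [← Real.exp_nat_mul]; norm_num
    rw [e2]
    calc Real.exp 1 ^ (2:ℕ) ≤ (2.7182818286:ℝ)^(2:ℕ) := by
          apply pow_le_pow_left₀ (le_of_lt (Real.exp_pos 1)) (le_of_lt this)
      _ ≤ (6/5:ℝ)^(11:ℕ) := by norm_num
  have h3 : Real.exp (2/11) ^ (11:ℕ) ≤ (6/5:ℝ)^(11:ℕ) := by rw [h]; exact h2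
  exact le_of_pow_le_pow_left₀ (by norm_num) (by norm_num) h3

lemma log_56 : Real.log (5/6) ≤ -(2/11) := by
  rw [Real.log_le_iff_le_exp (by norm_num)]
  have h := numeric_exp
  have h2 : Real.exp (-(2/11)) * Real.exp (2/11) = 1 := by
    rw [← Real.exp_add]; simp
  nlinarith [Real.exp_pos (-(2/11) : ℝ), Real.exp_pos (2/11 : ℝ)]
end BinomialMomentAux


open BinomialMomentAux in
/-- Centered absolute moment bound for `S ~ Binomial(k, 1/2)`: for every real `q > 3`,
`E[|S − E S|^q] ≤ 4√e · √q · (qk/(2e))^(q/2)`, where `E S = k/2`. -/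
theorem binomial_centered_moment_bound (k : ℕ) (hk : 0 < k) (q : ℝ) (hq : 3 < q) :
    ∫ s, |((s : ℕ) : ℝ) - (k : ℝ) / 2| ^ q
        ∂((PMF.binomial (1/2) (by norm_num) k).toMeasure) ≤
      4 * Real.sqrt (Real.exp 1) * Real.sqrt q *
        (q * k / (2 * Real.exp 1)) ^ (q / 2) := by
  have hq0 : (0:ℝ) < q := by linarith
  have he : (0:ℝ) < Real.exp 1 := Real.exp_pos 1
  have he1 : (1:ℝ) ≤ Real.exp 1 := Real.one_le_exp (by norm_num)
  set m : ℕ := ⌈q/2⌉₊ with hm_def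
  have hmq : q/2 ≤ (m:ℝ) := Nat.le_ceil _
  have hmlt : (m:ℝ) < q/2 + 1 := Nat.ceil_lt_add_one (by linarith)
  have hm1 : 1 ≤ m := by
    have : (1:ℝ) < m := by linarith
    exact_mod_cast this.le
  have hm0 : (0:ℝ) < m := by
    have : (0:ℕ) < m := hm1
    exact_mod_cast this
  -- weights
  set w : ℕ → ℝ := fun s => (k.choose s : ℝ) / 2^k with hw_def
  set z : ℕ → ℝ := fun s => |(s:ℝ) - k/2| ^ q with hz_def
  -- Step 1 : integral to sum
  have hint : ∫ s, |((s : ℕ) : ℝ) - (k : ℝ) / 2| ^ q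
        ∂((PMF.binomial (1/2) (by norm_num) k).toMeasure)
      = ∑ s ∈ range (k+1), w s * z s := by
    rw [MeasureTheory.integral_fintype (Integrable.of_finite)]
    rw [← Fin.sum_univ_eq_sum_range (fun s => w s * z s) (k+1)]
    congr 1
    ext i
    have hsing : ((PMF.binomial (1/2) (by norm_num) k).toMeasure {i}).toReal
        = (k.choose i : ℝ) / 2^k := by
      rw [PMF.toMeasure_apply_singleton _ _ (measurableSet_singleton i)]
      rw [PMF.binomial_apply]
      rw [ENNReal.coe_div (by norm_num), ENNReal.coe_one, ENNReal.coe_ofNat]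
      have h2 : (1:ℝ≥0∞) - 1/2 = 1/2 := by
        rw [ENNReal.sub_eq_of_eq_add (by norm_num)]
        rw [ENNReal.add_halves]
      rw [h2, ← pow_add]
      have h3 : (i:ℕ) + ((Fin.last k : ℕ) - (i:ℕ)) = k := by
        have hle : (i:ℕ) ≤ k := Nat.lt_succ_iff.mp i.isLt
        simp [Fin.last]; omega
      rw [h3]
      rw [ENNReal.toReal_mul, ENNReal.toReal_pow]
      norm_num [div_eq_mul_inv, mul_comm]
      exact Or.inl (by simp [one_div, ← ENNReal.inv_pow])
    rw [measureReal_def, hsing, smul_eq_mul]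
  rw [hint]
  -- Jensen setup
  set t : ℝ := (2*(m:ℝ))/q with ht_def
  have ht1 : 1 ≤ t := by
    rw [le_div_iff₀ hq0]; linarith
  have ht0 : 0 < t := by linarith
  have hw_nonneg : ∀ s ∈ range (k+1), 0 ≤ w s := fun s _ => by positivity
  have hw_sum : ∑ s ∈ range (k+1), w s = 1 := by
    rw [hw_def, ← Finset.sum_div]
    rw [show ∑ s ∈ range (k+1), (k.choose s : ℝ) = ((∑ s ∈ range (k+1), k.choose s : ℕ) : ℝ) by push_cast; ring]
    rw [Nat.sum_range_choose]
    push_cast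
    apply div_self; positivity
  have hz_nonneg : ∀ s ∈ range (k+1), 0 ≤ z s := fun s _ =>
    Real.rpow_nonneg (abs_nonneg _) q
  have hJ := Real.rpow_arith_mean_le_arith_mean_rpow (range (k+1)) w z hw_nonneg hw_sum hz_nonneg ht1
  -- identify z^t with the even power
  have hzt : ∀ s ∈ range (k+1), w s * (z s) ^ t = w s * ((s:ℝ) - k/2)^(2*m) := by
    intro s _
    congr 1
    rw [hz_def]
    rw [← Real.rpow_natCast ((s:ℝ) - k/2) (2*m)]
    rw [← Real.rpow_mul (abs_nonneg _)]
    have hqt : q * t = ((2*m : ℕ) : ℝ) := by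
      rw [ht_def]; push_cast
      field_simp
    rw [hqt, Real.rpow_natCast, Real.rpow_natCast]
    exact (even_two_mul m).pow_abs _
  rw [Finset.sum_congr rfl hzt] at hJ
  -- moment bound
  have hM : ∑ s ∈ range (k+1), w s * ((s:ℝ) - k/2)^(2*m)
      ≤ (m.factorial:ℝ) * ((k:ℝ)/2)^m := by
    have h1 := moment_bound k m
    simp only [A] at h1
    have h2 : ∑ s ∈ range (k+1), w s * ((s:ℝ) - k/2)^(2*m)
        = (∑ s ∈ range (k+1), (k.choose s : ℝ) * ((s:ℝ) - k/2)^(2*m)) / 2^k := by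
      rw [Finset.sum_div]
      apply Finset.sum_congr rfl; intro s _; rw [hw_def]; ring
    rw [h2]
    rw [div_le_iff₀ (by positivity)]
    have hA : (((2*m).factorial : ℝ) / (2^m * m.factorial)) ≤ (m.factorial:ℝ) * 2^m := by
      rw [div_le_iff₀ (by positivity)]
      have hcentral : ((2*m).factorial : ℕ) ≤ 4^m * m.factorial * m.factorial := by
        have hch : (2*m).choose m * m.factorial * m.factorial = (2*m).factorial := by
          have := Nat.choose_mul_factorial_mul_factorial (show m ≤ 2*m by omega)
          rwa [show 2*m - m = m by omega] at this
        have hle : (2*m).choose m ≤ 4^m := by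
          calc (2*m).choose m ≤ ∑ i ∈ range (2*m+1), (2*m).choose i :=
                Finset.single_le_sum (fun i _ => Nat.zero_le _) (by
                  exact Finset.mem_range.mpr (by omega))
            _ = 2^(2*m) := Nat.sum_range_choose (2*m)
            _ = 4^m := by rw [pow_mul]; norm_num
        calc (2*m).factorial = (2*m).choose m * m.factorial * m.factorial := hch.symm
          _ ≤ 4^m * m.factorial * m.factorial := by
              exact Nat.mul_le_mul_right _ (Nat.mul_le_mul_right _ hle)
      calc (((2*m).factorial : ℝ)) ≤ ((4^m * m.factorial * m.factorial : ℕ) : ℝ) := by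
            exact_mod_cast hcentral
        _ = (4:ℝ)^m * m.factorial * m.factorial := by push_cast; ring
        _ = (m.factorial:ℝ) * 2^m * (2^m * m.factorial) := by
            rw [show ((4:ℝ))^m = 2^m * 2^m from by rw [← mul_pow]; norm_num]; ring
    calc ∑ s ∈ range (k+1), (k.choose s : ℝ) * ((s:ℝ) - k/2)^(2*m)
        ≤ 2^k * (((2*m).factorial : ℝ) / (2^m * m.factorial)) * ((k:ℝ)/4)^m := h1
      _ ≤ 2^k * ((m.factorial:ℝ) * 2^m) * ((k:ℝ)/4)^m := by
          apply mul_le_mul_of_nonneg_right _ (by positivity)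
          apply mul_le_mul_of_nonneg_left hA (by positivity)
      _ = (m.factorial:ℝ) * (((k:ℝ)/4)^m * 2^m) * 2^k := by ring
      _ = (m.factorial:ℝ) * ((k:ℝ)/2)^m * 2^k := by
          rw [← mul_pow, show (k:ℝ)/4*2 = (k:ℝ)/2 by ring]
  -- conclude Jensen
  have hI_nonneg : 0 ≤ ∑ s ∈ range (k+1), w s * z s :=
    Finset.sum_nonneg (fun s hs => mul_nonneg (hw_nonneg s hs) (hz_nonneg s hs))
  have hIt : (∑ s ∈ range (k+1), w s * z s) ^ t ≤ (m.factorial:ℝ) * ((k:ℝ)/2)^m :=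
    le_trans hJ hM
  have hI : ∑ s ∈ range (k+1), w s * z s
      ≤ ((m.factorial:ℝ) * ((k:ℝ)/2)^m) ^ (1/t) := by
    have h1 : ∑ s ∈ range (k+1), w s * z s
        = ((∑ s ∈ range (k+1), w s * z s) ^ t) ^ (1/t) := by
      rw [← Real.rpow_mul hI_nonneg, mul_one_div, div_self (ne_of_gt ht0), Real.rpow_one]
    rw [h1]
    apply Real.rpow_le_rpow (Real.rpow_nonneg hI_nonneg t) hIt (by positivity)
  -- split the rpow
  have hsplit : ((m.factorial:ℝ) * ((k:ℝ)/2)^m) ^ (1/t)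
      = (m.factorial:ℝ)^(1/t) * ((k:ℝ)/2)^(q/2) := by
    rw [Real.mul_rpow (by positivity) (by positivity)]
    congr 1
    rw [← Real.rpow_natCast ((k:ℝ)/2) m, ← Real.rpow_mul (by positivity)]
    congr 1
    rw [ht_def]
    field_simp
  -- final bound on (m!)^(1/t)
  have hfinal : (m.factorial:ℝ)^(1/t) ≤ 4 * Real.sqrt (Real.exp 1) * Real.sqrt q * (q/Real.exp 1)^(q/2) := by
    have hu1 : 1/t ≤ 1 := by
      rw [div_le_one ht0]; exact ht1
    have hu0 : 0 < 1/t := by positivity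
    have hmu : (m:ℝ) * (1/t) = q/2 := by
      rw [ht_def]; field_simp
    have c1 : (m.factorial:ℝ)^(1/t) ≤ (Real.exp 1 * m * ((m:ℝ)/Real.exp 1)^m)^(1/t) :=
      Real.rpow_le_rpow (by positivity) (fact_le_stirling m hm1) hu0.le
    have c2 : (Real.exp 1 * m * ((m:ℝ)/Real.exp 1)^m)^(1/t)
        = (Real.exp 1 * m)^(1/t) * (((m:ℝ)/Real.exp 1)^m)^(1/t) := by
      rw [Real.mul_rpow (by positivity) (by positivity)]
    have c3 : (((m:ℝ)/Real.exp 1)^m)^(1/t) = ((m:ℝ)/Real.exp 1)^(q/2) := by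
      rw [← Real.rpow_natCast ((m:ℝ)/Real.exp 1) m, ← Real.rpow_mul (by positivity), hmu]
    have c4 : (Real.exp 1 * m)^(1/t) ≤ Real.exp 1 * m := by
      have h1m : 1 ≤ Real.exp 1 * m := by nlinarith
      calc (Real.exp 1 * m)^(1/t) ≤ (Real.exp 1 * m)^(1:ℝ) :=
            Real.rpow_le_rpow_of_exponent_le h1m hu1
        _ = Real.exp 1 * m := Real.rpow_one _
    have hm56 : (m:ℝ) ≤ (5/6)*q := by linarith
    have c5 : ((m:ℝ)/Real.exp 1)^(q/2) ≤ ((5/6)*q/Real.exp 1)^(q/2) := by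
      apply Real.rpow_le_rpow (by positivity) _ (by linarith)
      gcongr
    have c6 : ((5/6)*q/Real.exp 1)^(q/2) = (5/6:ℝ)^(q/2) * (q/Real.exp 1)^(q/2) := by
      rw [← Real.mul_rpow (by norm_num) (by positivity)]
      congr 1
      ring
    have c7 : (5/6:ℝ)^(q/2) ≤ Real.exp (-(q/11)) := by
      rw [Real.rpow_def_of_pos (by norm_num : (0:ℝ) < 5/6)]
      apply Real.exp_le_exp.mpr
      have := mul_le_mul_of_nonneg_right log_56 (show (0:ℝ) ≤ q/2 by linarith)
      calc Real.log (5/6) * (q/2) ≤ -(2/11) * (q/2) := this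
        _ = -(q/11) := by ring
    have c9 : Real.exp 1 * q * Real.exp (-(q/11)) ≤ 4 * Real.sqrt (Real.exp 1) * Real.sqrt q := by
      have hL : (0:ℝ) ≤ Real.exp 1 * q * Real.exp (-(q/11)) := by positivity
      have hR : (0:ℝ) ≤ 4 * Real.sqrt (Real.exp 1) * Real.sqrt q := by positivity
      apply le_of_pow_le_pow_left₀ (two_ne_zero) hR
      have hRsq : (4 * Real.sqrt (Real.exp 1) * Real.sqrt q)^2 = 16 * Real.exp 1 * q := by
        rw [mul_pow, mul_pow, Real.sq_sqrt he.le, Real.sq_sqrt hq0.le]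
        norm_num
      rw [hRsq]
      have hexp2 : Real.exp (-(q/11))^2 = Real.exp (-(2*q/11)) := by
        rw [sq, ← Real.exp_add]
        ring_nf
      have hkey : Real.exp 1 * q ≤ 16 * Real.exp (2*q/11) := by
        have h1 : Real.exp 1 * q ≤ 2.7182818286 * q :=
          mul_le_mul_of_nonneg_right (le_of_lt Real.exp_one_lt_d9) hq0.le
        have h2 := Real.add_one_le_exp (2*q/11)
        linarith
      have h3 : Real.exp 1 * q * Real.exp (-(2*q/11)) ≤ 16 := by
        have h5 := mul_le_mul_of_nonneg_right hkey (Real.exp_pos (-(2*q/11))).le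
        have h6 : Real.exp (2*q/11) * Real.exp (-(2*q/11)) = 1 := by
          rw [← Real.exp_add]; norm_num
        rw [mul_assoc (16:ℝ), h6, mul_one] at h5
        exact h5
      have h4 := mul_le_mul_of_nonneg_right h3 (mul_pos he hq0).le
      calc (Real.exp 1 * q * Real.exp (-(q/11)))^2
          = (Real.exp 1 * q * Real.exp (-(q/11))^2) * (Real.exp 1 * q) := by ring
        _ = (Real.exp 1 * q * Real.exp (-(2*q/11))) * (Real.exp 1 * q) := by rw [hexp2]
        _ ≤ 16 * (Real.exp 1 * q) := h4
        _ = 16 * Real.exp 1 * q := by ring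
    calc (m.factorial:ℝ)^(1/t)
        ≤ (Real.exp 1 * m)^(1/t) * (((m:ℝ)/Real.exp 1)^m)^(1/t) := by rw [← c2]; exact c1
      _ = (Real.exp 1 * m)^(1/t) * ((m:ℝ)/Real.exp 1)^(q/2) := by rw [c3]
      _ ≤ (Real.exp 1 * m) * ((m:ℝ)/Real.exp 1)^(q/2) := by
          apply mul_le_mul_of_nonneg_right c4 (Real.rpow_nonneg (by positivity) _)
      _ ≤ (Real.exp 1 * m) * ((5/6:ℝ)^(q/2) * (q/Real.exp 1)^(q/2)) := by
          apply mul_le_mul_of_nonneg_left _ (by positivity)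
          rw [← c6]; exact c5
      _ ≤ (Real.exp 1 * q) * (Real.exp (-(q/11)) * (q/Real.exp 1)^(q/2)) := by
          apply mul_le_mul
          · apply mul_le_mul_of_nonneg_left _ he.le
            linarith
          · apply mul_le_mul_of_nonneg_right c7 (Real.rpow_nonneg (by positivity) _)
          · positivity
          · positivity
      _ = (Real.exp 1 * q * Real.exp (-(q/11))) * (q/Real.exp 1)^(q/2) := by ring
      _ ≤ (4 * Real.sqrt (Real.exp 1) * Real.sqrt q) * (q/Real.exp 1)^(q/2) := by
          apply mul_le_mul_of_nonneg_right c9 (Real.rpow_nonneg (by positivity) _)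
  -- final assembly
  have hbase : (q * k / (2 * Real.exp 1)) ^ (q/2)
      = (q/Real.exp 1)^(q/2) * ((k:ℝ)/2)^(q/2) := by
    rw [← Real.mul_rpow (by positivity) (by positivity)]
    congr 1
    field_simp
  calc ∑ s ∈ range (k+1), w s * z s
      ≤ ((m.factorial:ℝ) * ((k:ℝ)/2)^m) ^ (1/t) := hI
    _ = (m.factorial:ℝ)^(1/t) * ((k:ℝ)/2)^(q/2) := hsplit
    _ ≤ (4 * Real.sqrt (Real.exp 1) * Real.sqrt q * (q/Real.exp 1)^(q/2)) * ((k:ℝ)/2)^(q/2) := by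
        apply mul_le_mul_of_nonneg_right hfinal (Real.rpow_nonneg (by positivity) _)
    _ = 4 * Real.sqrt (Real.exp 1) * Real.sqrt q * (q * k / (2 * Real.exp 1)) ^ (q/2) := by
        rw [hbase]; ring
end

section
/- Let X and Y be i.i.d. Poisson random variables with parameter λ > 0. Then for every real q > 3, E[|X − Y|^q] ≤ 2^(q/2+1) · e · √q · ((q/e)(2λ + q))^(q/2). -/
open MeasureTheory ProbabilityTheory Real NNReal
open scoped Nat

lemma pois_summable (r : ℝ≥0) (t : ℝ) :
    Summable (fun n : ℕ => poissonPMFReal r n * Real.exp (t * n)) := by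
  have h : (fun n : ℕ => poissonPMFReal r n * Real.exp (t * n)) =
      fun n : ℕ => Real.exp (-(r:ℝ)) * (((r : ℝ) * Real.exp t) ^ n / n !) := by
    funext n
    simp only [poissonPMFReal, mul_pow]
    rw [mul_comm t (n:ℝ), Real.exp_nat_mul]
    ring
  rw [h]
  exact (Real.summable_pow_div_factorial _).mul_left _

lemma pois_tsum (r : ℝ≥0) (t : ℝ) :
    ∑' n : ℕ, poissonPMFReal r n * Real.exp (t * n) =
      Real.exp ((r : ℝ) * (Real.exp t - 1)) := by
  have h : (fun n : ℕ => poissonPMFReal r n * Real.exp (t * n)) =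
      fun n : ℕ => Real.exp (-(r:ℝ)) * (((r : ℝ) * Real.exp t) ^ n / n !) := by
    funext n
    simp only [poissonPMFReal, mul_pow]
    rw [mul_comm t (n:ℝ), Real.exp_nat_mul]
    ring
  rw [h]
  have h2 : ∑' n : ℕ, ((r : ℝ) * Real.exp t) ^ n / n ! = Real.exp ((r : ℝ) * Real.exp t) := by
    rw [Real.exp_eq_exp_ℝ, NormedSpace.exp_eq_tsum_div]
  calc ∑' n : ℕ, Real.exp (-(r:ℝ)) * (((r : ℝ) * Real.exp t) ^ n / n !)
      = Real.exp (-(r:ℝ)) * ∑' n : ℕ, ((r : ℝ) * Real.exp t) ^ n / n ! := tsum_mul_left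
    _ = Real.exp (-(r:ℝ)) * Real.exp ((r : ℝ) * Real.exp t) := by rw [h2]
    _ = Real.exp ((r : ℝ) * (Real.exp t - 1)) := by rw [← Real.exp_add]; ring_nf

lemma pois_integrable (r : ℝ≥0) (t : ℝ) :
    Integrable (fun n : ℕ => Real.exp (t * n)) (poissonMeasure r) := by
  constructor
  · exact (measurable_of_countable _).aestronglyMeasurable
  · rw [hasFiniteIntegral_iff_norm]
    have h1 : ∫⁻ n : ℕ, ENNReal.ofReal ‖Real.exp (t * n)‖ ∂(poissonMeasure r) =
        ∑' n : ℕ, ENNReal.ofReal ‖Real.exp (t * n)‖ * (poissonMeasure r) {n} :=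
      lintegral_countable' _
    rw [h1]
    have h2 : ∀ n : ℕ, ENNReal.ofReal ‖Real.exp (t * n)‖ * (poissonMeasure r) {n} =
        ENNReal.ofReal (poissonPMFReal r n * Real.exp (t * n)) := by
      intro n
      rw [show (poissonMeasure r) {n} = poissonPMF r n by
        rw [poissonMeasure_singleton, ← poissonPMFReal_ofReal_eq_poissonPMF]; rfl]
      rw [show poissonPMF r n = ENNReal.ofReal (poissonPMFReal r n) from rfl]
      rw [Real.norm_eq_abs, abs_of_nonneg (Real.exp_nonneg _),
        ← ENNReal.ofReal_mul (Real.exp_nonneg _)]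
      rw [mul_comm]
    simp only [h2]
    rw [← ENNReal.ofReal_tsum_of_nonneg
      (fun n => mul_nonneg poissonPMFReal_nonneg (Real.exp_nonneg _)) (pois_summable r t)]
    exact ENNReal.ofReal_lt_top

lemma pois_mgf (r : ℝ≥0) (t : ℝ) :
    ∫ n : ℕ, Real.exp (t * n) ∂(poissonMeasure r) =
      Real.exp ((r : ℝ) * (Real.exp t - 1)) := by
  have hPo : poissonMeasure r = (poissonPMF r).toMeasure :=
      Measure.ext_iff_singleton.mpr fun n => by
        rw [poissonMeasure_singleton, PMF.toMeasure_apply_singleton _ _ (measurableSet_singleton n),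
          ← poissonPMFReal_ofReal_eq_poissonPMF]; rfl
  rw [hPo,
    PMF.integral_eq_tsum _ _ (hPo ▸ pois_integrable r t)]
  rw [← pois_tsum r t]
  congr 1
  funext n
  rw [show poissonPMF r n = ENNReal.ofReal (poissonPMFReal r n) from rfl,
    ENNReal.toReal_ofReal poissonPMFReal_nonneg, smul_eq_mul]

lemma exp58 : Real.exp (5/8) ≤ (128/123 : ℝ) ^ (16 : ℕ) := by
  have h0 : (123/128 : ℝ) ≤ Real.exp (-(5/128)) := by
    have := Real.add_one_le_exp (-(5/128 : ℝ))
    linarith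
  have h : Real.exp (5/128) ≤ 128/123 := by
    rw [show (5/128 : ℝ) = -(-(5/128)) by ring, Real.exp_neg]
    rw [show (128/123 : ℝ) = (123/128 : ℝ)⁻¹ by norm_num]
    exact inv_anti₀ (by norm_num) h0
  calc Real.exp (5/8) = Real.exp (5/128) ^ (16 : ℕ) := by
        rw [← Real.exp_nat_mul]; norm_num
    _ ≤ (128/123 : ℝ) ^ (16 : ℕ) := pow_le_pow_left₀ (Real.exp_nonneg _) h 16

lemma log3225 : Real.log (32/25) ≤ 32/125 := by
  have h1 : (32/25 : ℝ) ≤ (133/125 : ℝ) ^ (4 : ℕ) := by norm_num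
  have h2 : Real.log (32/25) ≤ Real.log ((133/125 : ℝ) ^ (4 : ℕ)) :=
    Real.log_le_log (by norm_num) h1
  rw [Real.log_pow] at h2
  have h3 : Real.log (133/125) ≤ 8/125 := by
    have := Real.log_le_sub_one_of_pos (show (0:ℝ) < 133/125 by norm_num)
    linarith
  calc Real.log (32/25) ≤ 4 * Real.log (133/125) := by push_cast at h2 ⊢; linarith
    _ ≤ 32/125 := by linarith

lemma key_num : -1 - Real.log (5/8) + 25/128 * Real.exp (5/8) ≤ (Real.log 2 - 1)/2 := by
  have hid : Real.log (32/25) = -2 * Real.log (5/8) - Real.log 2 := by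
    rw [show (32/25 : ℝ) = ((5/8 : ℝ)⁻¹) ^ (2:ℕ) * 2⁻¹ by norm_num]
    rw [Real.log_mul (by norm_num) (by norm_num), Real.log_pow, Real.log_inv, Real.log_inv]
    push_cast; ring
  have h1 := log3225
  have h2 := exp58
  have h3 : (25/128 : ℝ) * (128/123 : ℝ) ^ (16 : ℕ) ≤ 93/250 := by norm_num
  nlinarith [h2]

lemma point_bound (q s : ℝ) (hq : 0 < q) (hs : 0 < s) (a b : ℝ) :
    |a - b| ^ q ≤ (q / (Real.exp 1 * s)) ^ q *
      (Real.exp (s * a) * Real.exp (-s * b) + Real.exp (-s * a) * Real.exp (s * b)) := by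
  have hC : 0 ≤ (q / (Real.exp 1 * s)) ^ q := Real.rpow_nonneg (by positivity) q
  have key : ∀ y : ℝ, 0 ≤ y → y ^ q ≤ (q / (Real.exp 1 * s)) ^ q * Real.exp (s * y) := by
    intro y hy
    have hu : 0 ≤ s * y / q := by positivity
    have h1 : s * y / q ≤ Real.exp (s * y / q - 1) := by
      have := Real.add_one_le_exp (s * y / q - 1); linarith
    have h2 : (s * y / q) ^ q ≤ (Real.exp (s * y / q - 1)) ^ q :=
      Real.rpow_le_rpow hu h1 hq.le
    have h3 : (Real.exp (s * y / q - 1)) ^ q = Real.exp (-q) * Real.exp (s * y) := by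
      rw [show Real.exp (s * y / q - 1) = Real.exp 1 ^ (s * y / q - 1) from
        (Real.exp_one_rpow _).symm]
      rw [← Real.rpow_mul (Real.exp_nonneg 1), Real.exp_one_rpow, ← Real.exp_add]
      congr 1
      field_simp
      ring
    have h4 : y ^ q = (q / s) ^ q * (s * y / q) ^ q := by
      rw [← Real.mul_rpow (by positivity) hu]
      congr 1
      field_simp
    have h5 : (q / (Real.exp 1 * s)) ^ q = (q / s) ^ q * Real.exp (-q) := by
      rw [show q / (Real.exp 1 * s) = q / s * (Real.exp 1)⁻¹ by
        rw [division_def, division_def, mul_inv]; ring]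
      rw [Real.mul_rpow (by positivity) (by positivity),
        Real.inv_rpow (Real.exp_nonneg 1), Real.exp_one_rpow, ← Real.exp_neg]
    calc y ^ q = (q / s) ^ q * (s * y / q) ^ q := h4
      _ ≤ (q / s) ^ q * (Real.exp (s * y / q - 1)) ^ q := by
          exact mul_le_mul_of_nonneg_left h2 (Real.rpow_nonneg (by positivity) q)
      _ = (q / (Real.exp 1 * s)) ^ q * Real.exp (s * y) := by rw [h3, h5]; ring
  rcases abs_cases (a - b) with ⟨h, h'⟩ | ⟨h, h'⟩
  · rw [h]
    calc (a - b) ^ q ≤ (q / (Real.exp 1 * s)) ^ q * Real.exp (s * (a - b)) := key _ h'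
      _ ≤ _ := by
          have he : Real.exp (s * (a - b)) = Real.exp (s * a) * Real.exp (-s * b) := by
            rw [← Real.exp_add]; ring_nf
          rw [he]
          have : 0 ≤ (q / (Real.exp 1 * s)) ^ q * (Real.exp (-s * a) * Real.exp (s * b)) :=
            mul_nonneg hC (by positivity)
          nlinarith
  · rw [h]
    calc (-(a - b)) ^ q ≤ (q / (Real.exp 1 * s)) ^ q * Real.exp (s * -(a - b)) :=
          key _ (by linarith)
      _ ≤ _ := by
          have he : Real.exp (s * -(a - b)) = Real.exp (-s * a) * Real.exp (s * b) := by
            rw [← Real.exp_add]; ring_nf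
          rw [he]
          have : 0 ≤ (q / (Real.exp 1 * s)) ^ q * (Real.exp (s * a) * Real.exp (-s * b)) :=
            mul_nonneg hC (by positivity)
          nlinarith

lemma cosh_bound (s : ℝ) (hs : 0 ≤ s) :
    Real.exp s + Real.exp (-s) - 2 ≤ s ^ 2 * Real.exp s := by
  have ha : 0 < Real.exp s := Real.exp_pos s
  have hb : 0 < Real.exp (-s) := Real.exp_pos (-s)
  have hab : Real.exp (-s) * Real.exp s = 1 := by rw [← Real.exp_add]; simp
  have h2 : 1 - s ≤ Real.exp (-s) := by have := Real.add_one_le_exp (-s); linarith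
  have hkey : Real.exp s - 1 ≤ s * Real.exp s := by nlinarith
  have hnn : 0 ≤ Real.exp s - 1 := by nlinarith [Real.add_one_le_exp s]
  nlinarith [sq_nonneg (Real.exp s - 1), mul_pos hb ha]

set_option maxHeartbeats 1000000 in
/-- Moment bound for the difference of two i.i.d. Poisson(λ) random variables:
for every real `q > 3`, `E[|X − Y|^q] ≤ 2^(q/2+1) · e · √q · ((q/e)(2λ + q))^(q/2)`. -/
theorem poisson_diff_moment_bound (lam : ℝ≥0) (hlam : 0 < lam) (q : ℝ) (hq : 3 < q) :
    ∫ p : ℕ × ℕ, |(p.1 : ℝ) - (p.2 : ℝ)| ^ q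
        ∂((poissonMeasure lam).prod (poissonMeasure lam)) ≤
      2 ^ (q / 2 + 1) * Real.exp 1 * Real.sqrt q *
        (q / Real.exp 1 * (2 * (lam : ℝ) + q)) ^ (q / 2) := by
  have hq0 : (0:ℝ) < q := by linarith
  have hlam0 : (0:ℝ) ≤ (lam : ℝ) := lam.coe_nonneg
  set A : ℝ := 2 * (lam : ℝ) + q with hAdef
  have hA0 : 0 < A := by rw [hAdef]; linarith
  have hqA : q / A ≤ 1 := by rw [div_le_one hA0]; linarith
  set s : ℝ := 5/8 * Real.sqrt (q / A) with hsdef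
  have hsqrtpos : 0 < Real.sqrt (q / A) := Real.sqrt_pos.mpr (div_pos hq0 hA0)
  have hs0 : 0 < s := by rw [hsdef]; positivity
  have hsle : s ≤ 5/8 := by
    have h1 : Real.sqrt (q / A) ≤ 1 := by
      rw [show (1:ℝ) = Real.sqrt 1 by simp]
      exact Real.sqrt_le_sqrt hqA
    rw [hsdef]; nlinarith
  set C : ℝ := (q / (Real.exp 1 * s)) ^ q with hCdef
  have hC0 : 0 ≤ C := Real.rpow_nonneg (by positivity) q
  set μ := poissonMeasure lam with hμ
  -- Step 1: pointwise bound and integral monotonicity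
  have hint1 : Integrable (fun p : ℕ × ℕ =>
      Real.exp (s * p.1) * Real.exp (-s * p.2)) (μ.prod μ) := by
    have := (pois_integrable lam s).mul_prod (pois_integrable lam (-s))
    simpa [neg_mul] using this
  have hint2 : Integrable (fun p : ℕ × ℕ =>
      Real.exp (-s * p.1) * Real.exp (s * p.2)) (μ.prod μ) := by
    have := (pois_integrable lam (-s)).mul_prod (pois_integrable lam s)
    simpa [neg_mul] using this
  have step1 : ∫ p : ℕ × ℕ, |(p.1 : ℝ) - (p.2 : ℝ)| ^ q ∂(μ.prod μ) ≤
      ∫ p : ℕ × ℕ, C * (Real.exp (s * p.1) * Real.exp (-s * p.2) +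
        Real.exp (-s * p.1) * Real.exp (s * p.2)) ∂(μ.prod μ) := by
    apply integral_mono_of_nonneg
    · exact Filter.Eventually.of_forall fun p => Real.rpow_nonneg (abs_nonneg _) q
    · exact (hint1.add hint2).const_mul C
    · exact Filter.Eventually.of_forall fun p => point_bound q s hq0 hs0 _ _
  -- Step 2: compute the right-hand integral
  have hmgf : ∀ t : ℝ, ∫ n : ℕ, Real.exp (t * n) ∂μ =
      Real.exp ((lam : ℝ) * (Real.exp t - 1)) := fun t => pois_mgf lam t
  have step2 : ∫ p : ℕ × ℕ, C * (Real.exp (s * p.1) * Real.exp (-s * p.2) +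
        Real.exp (-s * p.1) * Real.exp (s * p.2)) ∂(μ.prod μ) =
      C * (2 * Real.exp ((lam : ℝ) * (Real.exp s - 1) + (lam : ℝ) * (Real.exp (-s) - 1))) := by
    rw [integral_const_mul, integral_add hint1 hint2]
    have e1 : ∫ p : ℕ × ℕ, Real.exp (s * p.1) * Real.exp (-s * p.2) ∂(μ.prod μ) =
        (∫ n : ℕ, Real.exp (s * n) ∂μ) * ∫ n : ℕ, Real.exp (-s * n) ∂μ :=
      integral_prod_mul (fun n : ℕ => Real.exp (s * n)) (fun n : ℕ => Real.exp (-s * n))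
    have e2 : ∫ p : ℕ × ℕ, Real.exp (-s * p.1) * Real.exp (s * p.2) ∂(μ.prod μ) =
        (∫ n : ℕ, Real.exp (-s * n) ∂μ) * ∫ n : ℕ, Real.exp (s * n) ∂μ :=
      integral_prod_mul (fun n : ℕ => Real.exp (-s * n)) (fun n : ℕ => Real.exp (s * n))
    have e3 : Real.exp ((lam:ℝ)*(Real.exp s - 1)) * Real.exp ((lam:ℝ)*(Real.exp (-s) - 1)) =
        Real.exp ((lam:ℝ)*(Real.exp s - 1) + (lam:ℝ)*(Real.exp (-s) - 1)) :=
      (Real.exp_add _ _).symm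
    rw [e1, e2, hmgf s, hmgf (-s), ← e3]
    ring
  -- Step 3: bound the exponent
  have hs2 : s ^ 2 = 25/64 * (q / A) := by
    rw [hsdef, mul_pow, Real.sq_sqrt (div_pos hq0 hA0).le]; ring
  have hlamA : (lam : ℝ) * (q / A) ≤ q / 2 := by
    rw [show (lam : ℝ) * (q / A) = (lam : ℝ) * q / A by ring, div_le_iff₀ hA0]
    nlinarith
  have hD : (lam : ℝ) * (Real.exp s - 1) + (lam : ℝ) * (Real.exp (-s) - 1) ≤
      q * (25/128 * Real.exp (5/8)) := by
    have h1 := cosh_bound s hs0.le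
    have h2 : Real.exp s ≤ Real.exp (5/8) := Real.exp_le_exp.mpr hsle
    have h3 : (lam : ℝ) * (Real.exp s + Real.exp (-s) - 2) ≤
        (lam : ℝ) * (s ^ 2 * Real.exp (5/8)) := by
      apply mul_le_mul_of_nonneg_left _ hlam0
      nlinarith [Real.exp_pos s, sq_nonneg s]
    have h4 : (lam : ℝ) * (s ^ 2 * Real.exp (5/8)) =
        ((lam : ℝ) * (q / A)) * (25/64 * Real.exp (5/8)) := by rw [hs2]; ring
    nlinarith [Real.exp_pos (5/8 : ℝ), hlamA, Real.exp_pos (-s)]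
  -- Step 4: rewrite C
  have hqsval : q / (Real.exp 1 * s) = 8/(5 * Real.exp 1) * Real.sqrt (q * A) := by
    have hsq : Real.sqrt (q / A) = Real.sqrt q / Real.sqrt A := Real.sqrt_div hq0.le A
    have hqq : Real.sqrt q * Real.sqrt q = q := Real.mul_self_sqrt hq0.le
    have hmul : Real.sqrt (q * A) = Real.sqrt q * Real.sqrt A := Real.sqrt_mul hq0.le A
    have hsA : 0 < Real.sqrt A := Real.sqrt_pos.mpr hA0
    have hsqq : 0 < Real.sqrt q := Real.sqrt_pos.mpr hq0
    rw [hsdef, hsq, hmul]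
    field_simp
    linear_combination (-1 : ℝ) * hqq
  have hCval : C = Real.exp ((Real.log (8/5) - 1) * q) * (q * A) ^ (q/2) := by
    rw [hCdef, hqsval, Real.mul_rpow (by positivity) (Real.sqrt_nonneg _)]
    have e1 : (8/(5 * Real.exp 1) : ℝ) ^ q = Real.exp ((Real.log (8/5) - 1) * q) := by
      rw [Real.rpow_def_of_pos (by positivity)]
      congr 1
      rw [show (8/(5 * Real.exp 1) : ℝ) = (8/5) / Real.exp 1 by ring,
        Real.log_div (by norm_num) (Real.exp_ne_zero 1), Real.log_exp]
    have e2 : Real.sqrt (q * A) ^ q = (q * A) ^ (q/2) := by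
      rw [Real.sqrt_eq_rpow, ← Real.rpow_mul (by positivity)]
      congr 1; ring
    rw [e1, e2]
  -- Step 5: rewrite RHS
  have hRHS : 2 ^ (q/2 + 1) * Real.exp 1 * Real.sqrt q * (q / Real.exp 1 * A) ^ (q/2) =
      2 * (q * A) ^ (q/2) *
        ((Real.exp 1 * Real.sqrt q) * Real.exp ((Real.log 2 - 1) * (q/2))) := by
    have e1 : (2:ℝ) ^ (q/2 + 1) = Real.exp (Real.log 2 * (q/2)) * 2 := by
      rw [Real.rpow_add two_pos, Real.rpow_one, Real.rpow_def_of_pos two_pos]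
    have e2 : (q / Real.exp 1 * A) ^ (q/2) = (q * A) ^ (q/2) * Real.exp (-(q/2)) := by
      rw [show q / Real.exp 1 * A = (q * A) * (Real.exp 1)⁻¹ by ring,
        Real.mul_rpow (by positivity) (by positivity),
        Real.inv_rpow (Real.exp_nonneg 1), Real.exp_one_rpow, ← Real.exp_neg]
    have e3 : Real.exp ((Real.log 2 - 1) * (q/2)) =
        Real.exp (Real.log 2 * (q/2)) * Real.exp (-(q/2)) := by
      rw [← Real.exp_add]; ring_nf
    rw [e1, e2, e3]; ring
  -- Step 6: final comparison
  have hkey : Real.log (8/5) - 1 + 25/128 * Real.exp (5/8) ≤ (Real.log 2 - 1)/2 := by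
    have h58 : Real.log (8/5) = - Real.log (5/8) := by
      rw [show (8/5 : ℝ) = (5/8 : ℝ)⁻¹ by norm_num, Real.log_inv]
    rw [h58]
    have := key_num
    linarith
  have hone : (1:ℝ) ≤ Real.exp 1 * Real.sqrt q := by
    have h1 : (1:ℝ) ≤ Real.sqrt q := by
      rw [show (1:ℝ) = Real.sqrt 1 by simp]
      exact Real.sqrt_le_sqrt (by linarith)
    nlinarith [Real.add_one_le_exp (1:ℝ)]
  have hfin : Real.exp ((Real.log (8/5) - 1) * q) *
      Real.exp ((lam : ℝ) * (Real.exp s - 1) + (lam : ℝ) * (Real.exp (-s) - 1)) ≤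
      (Real.exp 1 * Real.sqrt q) * Real.exp ((Real.log 2 - 1) * (q/2)) := by
    rw [← Real.exp_add]
    calc Real.exp ((Real.log (8/5) - 1) * q +
          ((lam : ℝ) * (Real.exp s - 1) + (lam : ℝ) * (Real.exp (-s) - 1))) ≤
        Real.exp ((Real.log 2 - 1) * (q/2)) := by
          apply Real.exp_le_exp.mpr
          nlinarith [mul_le_mul_of_nonneg_right hkey hq0.le]
      _ ≤ (Real.exp 1 * Real.sqrt q) * Real.exp ((Real.log 2 - 1) * (q/2)) :=
          le_mul_of_one_le_left (Real.exp_nonneg _) hone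
  have hP0 : (0:ℝ) ≤ (q * A) ^ (q/2) := Real.rpow_nonneg (by positivity) _
  calc ∫ p : ℕ × ℕ, |(p.1 : ℝ) - (p.2 : ℝ)| ^ q ∂(μ.prod μ) ≤
      ∫ p : ℕ × ℕ, C * (Real.exp (s * p.1) * Real.exp (-s * p.2) +
        Real.exp (-s * p.1) * Real.exp (s * p.2)) ∂(μ.prod μ) := step1
    _ = C * (2 * Real.exp ((lam : ℝ) * (Real.exp s - 1) +
        (lam : ℝ) * (Real.exp (-s) - 1))) := step2
    _ = 2 * (q * A) ^ (q/2) * (Real.exp ((Real.log (8/5) - 1) * q) *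
        Real.exp ((lam : ℝ) * (Real.exp s - 1) + (lam : ℝ) * (Real.exp (-s) - 1))) := by
        rw [hCval]; ring
    _ ≤ 2 * (q * A) ^ (q/2) *
        ((Real.exp 1 * Real.sqrt q) * Real.exp ((Real.log 2 - 1) * (q/2))) := by
        exact mul_le_mul_of_nonneg_left hfin (mul_nonneg (by norm_num) hP0)
    _ = 2 ^ (q/2 + 1) * Real.exp 1 * Real.sqrt q * (q / Real.exp 1 * A) ^ (q/2) := hRHS.symm
end

section
/- Let h : 𝒳^m → ℝ be a symmetric measurable function, m ≤ n, and define the U-statistic Uₙ(x₁,…,xₙ) = C(n,m)^(−1) ∑_{1≤i₁<…<i_m≤n} h(x_{i₁},…,x_{i_m}). Define W(x₁,…,xₙ) = (1/r) ∑_{j=1}^r h(x_{(j−1)m+1},…,x_{jm}) with r = ⌊n/m⌋. Then Uₙ(x₁,…,xₙ) = (1/n!) ∑_σ W(x_{σ(1)},…,x_{σ(n)}), where the sum runs over all permutations σ of {1,…,n}. -/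
set_option autoImplicit false

open Finset

/-- Index of the `i`-th coordinate of the `j`-th block of size `m` inside `Fin n`. -/
def blockIdx (n m : ℕ) (j : Fin (n / m)) (i : Fin m) : Fin n :=
  ⟨j.1 * m + i.1, by
    have h1 : j.1 * m + i.1 < (j.1 + 1) * m := by
      have := i.2; ring_nf; omega
    have h2 : (j.1 + 1) * m ≤ (n / m) * m := Nat.mul_le_mul_right m j.2
    exact lt_of_lt_of_le h1 (le_trans h2 (Nat.div_mul_le_self n m))⟩

lemma exists_perm_comp {m n : ℕ} {ι ι' : Fin m → Fin n}
    (hι : Function.Injective ι) (hι' : Function.Injective ι') :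
    ∃ τ : Equiv.Perm (Fin n), ∀ i, τ (ι i) = ι' i := by
  classical
  have hr : ∀ {f : Fin m → Fin n}, Function.Injective f →
      Fintype.card {a // a ∈ Set.range f} = m := by
    intro f hf
    exact (Fintype.card_congr (Equiv.ofInjective f hf).symm).trans (Fintype.card_fin m)
  have hcard : Fintype.card {a // ¬ a ∈ Set.range ι} = Fintype.card {a // ¬ a ∈ Set.range ι'} := by
    rw [Fintype.card_subtype_compl, Fintype.card_subtype_compl, hr hι, hr hι']
  let e1 : {a // a ∈ Set.range ι} ≃ {a // a ∈ Set.range ι'} :=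
    (Equiv.ofInjective ι hι).symm.trans (Equiv.ofInjective ι' hι')
  let e2 : {a // ¬ a ∈ Set.range ι} ≃ {a // ¬ a ∈ Set.range ι'} := Fintype.equivOfCardEq hcard
  refine ⟨(Equiv.sumCompl (· ∈ Set.range ι)).symm.trans
    ((e1.sumCongr e2).trans (Equiv.sumCompl (· ∈ Set.range ι'))), fun i => ?_⟩
  simp only [Equiv.trans_apply]
  rw [Equiv.sumCompl_symm_apply_of_pos (p := (· ∈ Set.range ι)) ⟨i, rfl⟩]
  have h1 : e1 ⟨ι i, ⟨i, rfl⟩⟩ = ⟨ι' i, ⟨i, rfl⟩⟩ := by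
    simp only [e1, Equiv.trans_apply]
    have : (Equiv.ofInjective ι hι).symm ⟨ι i, ⟨i, rfl⟩⟩ = i := by
      rw [Equiv.symm_apply_eq]; rfl
    rw [this]; rfl
  simp [h1]

lemma sum_perm_invariant {m n : ℕ} {𝒳 : Type*} (x : Fin n → 𝒳) (h : (Fin m → 𝒳) → ℝ)
    {ι ι' : Fin m → Fin n} (hι : Function.Injective ι) (hι' : Function.Injective ι') :
    ∑ σ : Equiv.Perm (Fin n), h (fun i => x (σ (ι i))) =
      ∑ σ : Equiv.Perm (Fin n), h (fun i => x (σ (ι' i))) := by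
  obtain ⟨τ, hτ⟩ := exists_perm_comp hι hι'
  exact (Fintype.sum_equiv (Equiv.mulRight τ)
    (fun σ => h (fun i => x (σ (ι' i)))) (fun σ => h (fun i => x (σ (ι i))))
    (fun σ => by simp [Equiv.Perm.mul_apply, hτ])).symm

lemma h_sym_orderIso {m n : ℕ} {𝒳 : Type*} (x : Fin n → 𝒳) (h : (Fin m → 𝒳) → ℝ)
    (hsym : ∀ (σ : Equiv.Perm (Fin m)) (y : Fin m → 𝒳), h (y ∘ σ) = h y)
    (g : Fin m → Fin n) (hg : Function.Injective g)
    (s : Finset (Fin n)) (hs : s.card = m) (him : ∀ i, g i ∈ s) :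
    h (fun i => x (g i)) = h (fun i => x (s.orderIsoOfFin hs i)) := by
  classical
  let f : Fin m → Fin m := fun i => (s.orderIsoOfFin hs).symm ⟨g i, him i⟩
  have hfinj : Function.Injective f := by
    intro i j hij
    have : (⟨g i, him i⟩ : s) = ⟨g j, him j⟩ := (s.orderIsoOfFin hs).symm.injective hij
    exact hg (by simpa using congrArg Subtype.val this)
  have hfbij : Function.Bijective f := (Finite.injective_iff_bijective).mp hfinj
  have := hsym (Equiv.ofBijective f hfbij) (fun i => x (s.orderIsoOfFin hs i))
  rw [← this]
  congr 1
  funext i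
  simp only [Function.comp_apply, Equiv.ofBijective_apply, f]
  rw [OrderIso.apply_symm_apply]

lemma orderIsoOfFin_image {m n : ℕ} (s : Finset (Fin n)) (hs : s.card = m) :
    Finset.image (fun i => ((s.orderIsoOfFin hs i : Fin n))) Finset.univ = s := by
  classical
  apply Finset.eq_of_subset_of_card_le
  · intro a ha
    obtain ⟨i, _, rfl⟩ := Finset.mem_image.mp ha
    exact (s.orderIsoOfFin hs i).2
  · rw [Finset.card_image_of_injective _ (fun i j hij =>
      (s.orderIsoOfFin hs).injective (Subtype.ext hij)), Finset.card_univ, Fintype.card_fin, hs]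


/-- Hoeffding's representation of a U-statistic: for a symmetric kernel `h` of order `m ≤ n`,
the U-statistic `Uₙ(x) = C(n,m)⁻¹ ∑_{i₁<…<i_m} h(x_{i₁},…,x_{i_m})` equals the average over all
permutations `σ` of `{1,…,n}` of `W(x_{σ(1)},…,x_{σ(n)})`, where
`W(x₁,…,xₙ) = r⁻¹ ∑_{j=1}^r h(x_{(j−1)m+1},…,x_{jm})` and `r = ⌊n/m⌋`. -/
theorem hoeffding_representation {𝒳 : Type*} (n m : ℕ) (hm : 0 < m) (hmn : m ≤ n)
    (h : (Fin m → 𝒳) → ℝ)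
    (hsym : ∀ (σ : Equiv.Perm (Fin m)) (y : Fin m → 𝒳), h (y ∘ σ) = h y)
    (x : Fin n → 𝒳) :
    ((n.choose m : ℝ))⁻¹ *
        ∑ s ∈ (Finset.powersetCard m (Finset.univ : Finset (Fin n))).attach,
          h (fun i => x ((s.1.orderIsoOfFin (Finset.mem_powersetCard.mp s.2).2 i : Fin n))) =
      ((n.factorial : ℝ))⁻¹ *
        ∑ σ : Equiv.Perm (Fin n),
          ((n / m : ℕ) : ℝ)⁻¹ *
            ∑ j : Fin (n / m), h (fun i => x (σ (blockIdx n m j i))) := by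
  classical
  set P := Finset.powersetCard m (Finset.univ : Finset (Fin n)) with hP
  let H : Finset (Fin n) → ℝ := fun s =>
    if hs : s.card = m then h (fun i => x (s.orderIsoOfFin hs i)) else 0
  -- (b): for any σ and s of card m
  have hb : ∀ (σ : Equiv.Perm (Fin n)) (s : Finset (Fin n)) (hs : s.card = m),
      h (fun i => x (σ (s.orderIsoOfFin hs i))) = H (s.image σ) := by
    intro σ s hs
    have hcard : (s.image σ).card = m := by
      rw [Finset.card_image_of_injective _ σ.injective, hs]
    have hg : Function.Injective (fun i => σ (s.orderIsoOfFin hs i : Fin n)) := by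
      intro i j hij
      exact (s.orderIsoOfFin hs).injective (Subtype.ext (σ.injective hij))
    have him : ∀ i, σ (s.orderIsoOfFin hs i : Fin n) ∈ s.image σ := fun i =>
      Finset.mem_image_of_mem σ (s.orderIsoOfFin hs i).2
    have := h_sym_orderIso x h hsym _ hg (s.image σ) hcard him
    rw [this]
    simp only [H]
    rw [dif_pos hcard]
  -- (c): reindexing by image under σ
  have hc : ∀ σ : Equiv.Perm (Fin n), ∑ s ∈ P, H (s.image σ) = ∑ s ∈ P, H s := by
    intro σ
    refine Finset.sum_nbij' (fun s => s.image σ) (fun t => t.image σ.symm) ?_ ?_ ?_ ?_ ?_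
    · intro s hsP
      rw [hP, Finset.mem_powersetCard] at hsP ⊢
      exact ⟨Finset.subset_univ _, by rw [Finset.card_image_of_injective _ σ.injective, hsP.2]⟩
    · intro t htP
      rw [hP, Finset.mem_powersetCard] at htP ⊢
      exact ⟨Finset.subset_univ _, by rw [Finset.card_image_of_injective _ σ.symm.injective, htP.2]⟩
    · intro s _
      simp [Finset.image_image, Function.comp]
    · intro t _
      simp [Finset.image_image, Function.comp]
    · intro s _; rfl
  -- A: the canonical permutation sum
  set A := ∑ σ : Equiv.Perm (Fin n), h (fun i => x (σ (Fin.castLE hmn i))) with hA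
  -- Step 1: LHS sum equals ∑ s in P, H s
  have hS : ∑ s ∈ P.attach,
      h (fun i => x ((s.1.orderIsoOfFin (Finset.mem_powersetCard.mp s.2).2 i : Fin n))) =
      ∑ s ∈ P, H s := by
    rw [← Finset.sum_attach P H]
    refine Finset.sum_congr rfl fun s _ => ?_
    simp only [H]
    rw [dif_pos (Finset.mem_powersetCard.mp s.2).2]
  -- Step 2
  have hstep2 : (n.choose m : ℝ) * A = (n.factorial : ℝ) * ∑ s ∈ P, H s := by
    have hT1 : ∀ σ : Equiv.Perm (Fin n),
        (∑ s ∈ P.attach,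
          h (fun i => x (σ (s.1.orderIsoOfFin (Finset.mem_powersetCard.mp s.2).2 i)))) =
        ∑ s ∈ P, H s := by
      intro σ
      rw [← hc σ, ← Finset.sum_attach P (fun s => H (s.image σ))]
      exact Finset.sum_congr rfl fun s _ => hb σ s.1 (Finset.mem_powersetCard.mp s.2).2
    have hT2 : ∀ s : {s // s ∈ P},
        (∑ σ : Equiv.Perm (Fin n),
          h (fun i => x (σ (s.1.orderIsoOfFin (Finset.mem_powersetCard.mp s.2).2 i)))) = A := by
      intro s
      rw [hA]
      exact sum_perm_invariant x h
        (fun i j hij => (s.1.orderIsoOfFin _).injective (Subtype.ext hij))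
        (Fin.castLE_injective hmn)
    calc (n.choose m : ℝ) * A
        = ∑ _s ∈ P.attach, A := by
          rw [Finset.sum_const, Finset.card_attach, hP, Finset.card_powersetCard,
            Finset.card_univ, Fintype.card_fin, nsmul_eq_mul]
      _ = ∑ s ∈ P.attach, ∑ σ : Equiv.Perm (Fin n),
            h (fun i => x (σ (s.1.orderIsoOfFin (Finset.mem_powersetCard.mp s.2).2 i))) := by
          exact Finset.sum_congr rfl fun s _ => (hT2 s).symm
      _ = ∑ σ : Equiv.Perm (Fin n), ∑ s ∈ P.attach,
            h (fun i => x (σ (s.1.orderIsoOfFin (Finset.mem_powersetCard.mp s.2).2 i))) :=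
          Finset.sum_comm
      _ = ∑ _σ : Equiv.Perm (Fin n), ∑ s ∈ P, H s :=
          Finset.sum_congr rfl fun σ _ => hT1 σ
      _ = (n.factorial : ℝ) * ∑ s ∈ P, H s := by
          rw [Finset.sum_const, Finset.card_univ, Fintype.card_perm, Fintype.card_fin,
            nsmul_eq_mul]
  -- Step 3: the RHS inner double sum equals A
  have hr1 : 1 ≤ n / m := (Nat.one_le_div_iff hm).mpr hmn
  have hblock : ∀ j : Fin (n / m), Function.Injective (blockIdx n m j) := by
    intro j i₁ i₂ hij
    have := congrArg Fin.val hij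
    simp only [blockIdx] at this
    exact Fin.ext (by omega)
  have hstep3 : ∑ σ : Equiv.Perm (Fin n), ∑ j : Fin (n / m),
      h (fun i => x (σ (blockIdx n m j i))) = ((n / m : ℕ) : ℝ) * A := by
    rw [Finset.sum_comm]
    calc ∑ j : Fin (n / m), ∑ σ : Equiv.Perm (Fin n), h (fun i => x (σ (blockIdx n m j i)))
        = ∑ _j : Fin (n / m), A := Finset.sum_congr rfl fun j _ =>
            sum_perm_invariant x h (hblock j) (Fin.castLE_injective hmn)
      _ = ((n / m : ℕ) : ℝ) * A := by
          rw [Finset.sum_const, Finset.card_univ, Fintype.card_fin, nsmul_eq_mul]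
  -- Finish
  rw [hS]
  have hrw : ∑ σ : Equiv.Perm (Fin n), ((n / m : ℕ) : ℝ)⁻¹ *
      ∑ j : Fin (n / m), h (fun i => x (σ (blockIdx n m j i))) =
      ((n / m : ℕ) : ℝ)⁻¹ * (((n / m : ℕ) : ℝ) * A) := by
    rw [← Finset.mul_sum, hstep3]
  rw [hrw]
  have hr0 : ((n / m : ℕ) : ℝ) ≠ 0 := Nat.cast_ne_zero.mpr (by omega)
  rw [inv_mul_cancel_left₀ hr0]
  have hC : ((n.choose m : ℕ) : ℝ) ≠ 0 := Nat.cast_ne_zero.mpr (Nat.choose_pos hmn).ne'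
  have hF : ((n.factorial : ℕ) : ℝ) ≠ 0 := Nat.cast_ne_zero.mpr n.factorial_ne_zero
  field_simp
  linarith [hstep2]
end

section
/- Let X₁,…,Xₙ be independent random variables and Z = f(X₁,…,Xₙ) square-integrable. Then Var(Z) ≤ (1/2) ∑ᵢ₌₁ⁿ E[(Z − Z'ᵢ)²], where Z'ᵢ = f(X₁,…,X'ᵢ,…,Xₙ) and X'₁,…,X'ₙ are independent copies of X₁,…,Xₙ. -/
set_option autoImplicit false

open MeasureTheory ProbabilityTheory Function Set

section helpers

variable {α β : Type*} [MeasurableSpace α] [MeasurableSpace β]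

/-- Integral under a measure-preserving map (no embedding needed). -/
theorem MeasureTheory.MeasurePreserving.integral_comp'' {P : Measure α} {Q : Measure β} {u : α → β}
    (h : MeasurePreserving u P Q) {g : β → ℝ} (hg : AEStronglyMeasurable g Q) :
    ∫ x, g (u x) ∂P = ∫ y, g y ∂Q := by
  rw [← h.map_eq] at hg ⊢
  exact (integral_map h.measurable.aemeasurable hg).symm

theorem integrable_mul_of_L2 {P : Measure α} {g h : α → ℝ}
    (hg : MemLp g 2 P) (hh : MemLp h 2 P) :
    Integrable (fun x => g x * h x) P := by
  refine Integrable.mono' (hg.integrable_sq.add hh.integrable_sq)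
    (hg.aestronglyMeasurable.mul hh.aestronglyMeasurable) ?_
  filter_upwards with x
  have : |g x * h x| ≤ g x ^ 2 + h x ^ 2 := by
    rw [abs_mul]
    nlinarith [sq_nonneg (|g x| - |h x|), abs_nonneg (g x), abs_nonneg (h x),
      sq_abs (g x), sq_abs (h x)]
  calc ‖g x * h x‖ = |g x * h x| := Real.norm_eq_abs _
    _ ≤ g x ^ 2 + h x ^ 2 := this

/-- Jensen for probability measures: `(∫ g)^2 ≤ ∫ g^2`. -/
theorem sq_integral_le {P : Measure α} [IsProbabilityMeasure P] {g : α → ℝ}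
    (hg : MemLp g 2 P) : (∫ x, g x ∂P) ^ 2 ≤ ∫ x, g x ^ 2 ∂P := by
  have h := variance_nonneg g P
  rw [variance_eq_sub hg] at h
  have : (∫ x, (g ^ 2) x ∂P) = ∫ x, g x ^ 2 ∂P := by simp [Pi.pow_apply]
  linarith [h, this ▸ h]

end helpers

section pimeasure

variable {𝒳 : Type*} [MeasurableSpace 𝒳] {n : ℕ}
  (ν : Fin n → Measure 𝒳) [∀ i, IsProbabilityMeasure (ν i)]

theorem mp_update (i : Fin n) :
    MeasurePreserving (fun p : (Fin n → 𝒳) × 𝒳 => Function.update p.1 i p.2)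
      ((Measure.pi ν).prod (ν i)) (Measure.pi ν) := by
  refine ⟨measurable_update', ?_⟩
  refine (Measure.pi_eq fun s hs => ?_).symm
  rw [Measure.map_apply measurable_update' (MeasurableSet.univ_pi hs)]
  have hpre : (fun p : (Fin n → 𝒳) × 𝒳 => Function.update p.1 i p.2) ⁻¹' univ.pi s
      = (univ.pi (Function.update s i univ)) ×ˢ s i := by
    ext ⟨x, y⟩
    simp only [mem_preimage, mem_pi, mem_univ, true_implies, mem_prod]
    constructor
    · intro hmem
      refine ⟨fun j => ?_, by simpa using hmem i⟩
      rcases eq_or_ne j i with rfl | hj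
      · simp
      · simpa [Function.update_of_ne hj] using hmem j
    · rintro ⟨h1, h2⟩ j
      rcases eq_or_ne j i with rfl | hj
      · simpa using h2
      · simpa [Function.update_of_ne hj] using h1 j
  rw [hpre, Measure.prod_prod, Measure.pi_pi]
  have : ∀ j, ν j (Function.update s i univ j) = Function.update (fun j => ν j (s j)) i 1 j := by
    intro j
    rcases eq_or_ne j i with rfl | hj
    · simp
    · simp [Function.update_of_ne hj]
  rw [Finset.prod_congr rfl (fun j _ => this j), Finset.prod_update_of_mem (Finset.mem_univ i),
    one_mul, mul_comm, ← Finset.erase_eq]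
  exact Finset.mul_prod_erase Finset.univ (fun j => ν j (s j)) (Finset.mem_univ i)

theorem mp_eval (i : Fin n) :
    MeasurePreserving (fun x : Fin n → 𝒳 => x i) (Measure.pi ν) (ν i) := by
  refine ⟨measurable_pi_apply i, ?_⟩
  ext s hs
  rw [Measure.map_apply (measurable_pi_apply i) hs]
  have h2 : ((fun x : Fin n → 𝒳 => x i) ⁻¹' s) = univ.pi (Function.update (fun _ => univ) i s) := by
    ext x
    simp only [mem_preimage, mem_pi, mem_univ, true_implies]
    constructor
    · intro hx j
      rcases eq_or_ne j i with rfl | hj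
      · simpa using hx
      · simp [Function.update_of_ne hj]
    · intro hx
      simpa using hx i
  rw [h2, Measure.pi_pi]
  rw [Finset.prod_eq_single i (fun j _ hj => by simp [Function.update_of_ne hj]) (by simp)]
  simp

end pimeasure

section avg

variable {𝒳 : Type*} [MeasurableSpace 𝒳] {n : ℕ}
  (ν : Fin n → Measure 𝒳) [∀ i, IsProbabilityMeasure (ν i)]

/-- Averaging over the `i`-th coordinate. -/
noncomputable def avg (i : Fin n) (g : (Fin n → 𝒳) → ℝ) : (Fin n → 𝒳) → ℝ :=
  fun x => ∫ y, g (Function.update x i y) ∂(ν i)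

variable {g h : (Fin n → 𝒳) → ℝ}

theorem avg_measurable (i : Fin n) (hg : Measurable g) : Measurable (avg ν i g) := by
  have h : StronglyMeasurable fun p : (Fin n → 𝒳) × 𝒳 => g (Function.update p.1 i p.2) :=
    (hg.comp measurable_update').stronglyMeasurable
  exact h.integral_prod_right'.measurable

theorem memℒp_comp_update (i : Fin n) (hg2 : MemLp g 2 (Measure.pi ν)) :
    MemLp (fun p : (Fin n → 𝒳) × 𝒳 => g (Function.update p.1 i p.2)) 2
      ((Measure.pi ν).prod (ν i)) :=
  hg2.comp_measurePreserving (mp_update ν i)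

theorem integrable_comp_update (i : Fin n) (hint : Integrable h (Measure.pi ν)) :
    Integrable (fun p : (Fin n → 𝒳) × 𝒳 => h (Function.update p.1 i p.2))
      ((Measure.pi ν).prod (ν i)) := by
  rw [← memLp_one_iff_integrable] at hint ⊢
  exact hint.comp_measurePreserving (mp_update ν i)

/-- Total expectation through conditioning on coordinate `i`. -/
theorem integral_avg_eq (i : Fin n) (hint : Integrable h (Measure.pi ν)) :
    ∫ x, h x ∂(Measure.pi ν)
      = ∫ x, ∫ y, h (Function.update x i y) ∂(ν i) ∂(Measure.pi ν) := by
  rw [← (mp_update ν i).integral_comp'' hint.aestronglyMeasurable]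
  exact integral_prod _ (integrable_comp_update ν i hint)

theorem avg_sq_le (i : Fin n) (hg : Measurable g) (hg2 : MemLp g 2 (Measure.pi ν)) :
    ∀ᵐ x ∂(Measure.pi ν),
      (avg ν i g x) ^ 2 ≤ ∫ y, g (Function.update x i y) ^ 2 ∂(ν i) := by
  have hsq : Integrable (fun p : (Fin n → 𝒳) × 𝒳 => g (Function.update p.1 i p.2) ^ 2)
      ((Measure.pi ν).prod (ν i)) := (memℒp_comp_update ν i hg2).integrable_sq
  filter_upwards [hsq.prod_right_ae] with x hx
  exact sq_integral_le
    ((memLp_two_iff_integrable_sq ((hg.comp (measurable_update x)).aestronglyMeasurable)).mpr hx)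

theorem avg_memℒp_and_le (i : Fin n) (hg : Measurable g) (hg2 : MemLp g 2 (Measure.pi ν)) :
    MemLp (avg ν i g) 2 (Measure.pi ν) ∧
      ∫ x, (avg ν i g x) ^ 2 ∂(Measure.pi ν) ≤ ∫ x, g x ^ 2 ∂(Measure.pi ν) := by
  have hsq : Integrable (fun p : (Fin n → 𝒳) × 𝒳 => g (Function.update p.1 i p.2) ^ 2)
      ((Measure.pi ν).prod (ν i)) := (memℒp_comp_update ν i hg2).integrable_sq
  have hInt : Integrable (fun x => ∫ y, g (Function.update x i y) ^ 2 ∂(ν i)) (Measure.pi ν) :=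
    hsq.integral_prod_left
  have hsqle := avg_sq_le ν i hg hg2
  have hmeas := avg_measurable ν i hg
  have hInt2 : Integrable (fun x => (avg ν i g x) ^ 2) (Measure.pi ν) := by
    refine hInt.mono' ((hmeas.pow_const 2).aestronglyMeasurable) ?_
    filter_upwards [hsqle] with x hx
    rw [Real.norm_eq_abs, abs_of_nonneg (sq_nonneg _)]
    exact hx
  refine ⟨(memLp_two_iff_integrable_sq hmeas.aestronglyMeasurable).mpr hInt2, ?_⟩
  calc ∫ x, (avg ν i g x) ^ 2 ∂(Measure.pi ν)
      ≤ ∫ x, ∫ y, g (Function.update x i y) ^ 2 ∂(ν i) ∂(Measure.pi ν) :=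
        integral_mono_ae hInt2 hInt hsqle
    _ = ∫ x, g x ^ 2 ∂(Measure.pi ν) := (integral_avg_eq ν i hg2.integrable_sq).symm

theorem avg_update_self (i : Fin n) (x : Fin n → 𝒳) (y : 𝒳) :
    avg ν i g (Function.update x i y) = avg ν i g x := by
  simp only [avg, Function.update_idem]

theorem integral_mul_avg (i : Fin n) (hg : Measurable g) (hg2 : MemLp g 2 (Measure.pi ν)) :
    ∫ x, g x * avg ν i g x ∂(Measure.pi ν)
      = ∫ x, (avg ν i g x) ^ 2 ∂(Measure.pi ν) := by
  have hmem := (avg_memℒp_and_le ν i hg hg2).1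
  have hmul : Integrable (fun x => g x * avg ν i g x) (Measure.pi ν) :=
    integrable_mul_of_L2 hg2 hmem
  rw [integral_avg_eq ν i hmul]
  refine integral_congr_ae (Filter.Eventually.of_forall fun x => ?_)
  have h1 : ∀ y, avg ν i g (Function.update x i y) = avg ν i g x :=
    fun y => avg_update_self ν i x y
  simp only [h1]
  rw [integral_mul_const, ← avg, sq]

theorem integral_sub_avg_sq (i : Fin n) (hg : Measurable g)
    (hg2 : MemLp g 2 (Measure.pi ν)) :
    ∫ x, (g x - avg ν i g x) ^ 2 ∂(Measure.pi ν)
      = ∫ x, g x ^ 2 ∂(Measure.pi ν) - ∫ x, (avg ν i g x) ^ 2 ∂(Measure.pi ν) := by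
  have hmem := (avg_memℒp_and_le ν i hg hg2).1
  have h1 : Integrable (fun x => g x ^ 2) (Measure.pi ν) := hg2.integrable_sq
  have h2 : Integrable (fun x => (avg ν i g x) ^ 2) (Measure.pi ν) := hmem.integrable_sq
  have h3 : Integrable (fun x => g x * avg ν i g x) (Measure.pi ν) :=
    integrable_mul_of_L2 hg2 hmem
  have expand : ∀ x : Fin n → 𝒳,
      (g x - avg ν i g x) ^ 2 = g x ^ 2 - 2 * (g x * avg ν i g x) + (avg ν i g x) ^ 2 :=
    fun x => by ring
  calc ∫ x, (g x - avg ν i g x) ^ 2 ∂(Measure.pi ν)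
      = ∫ x, (g x ^ 2 - 2 * (g x * avg ν i g x) + (avg ν i g x) ^ 2) ∂(Measure.pi ν) := by
        simp only [expand]
    _ = (∫ x, g x ^ 2 ∂(Measure.pi ν) - ∫ x, 2 * (g x * avg ν i g x) ∂(Measure.pi ν))
        + ∫ x, (avg ν i g x) ^ 2 ∂(Measure.pi ν) := by
        have h12 : Integrable (fun x => g x ^ 2 - 2 * (g x * avg ν i g x)) (Measure.pi ν) :=
          h1.sub (h3.const_mul 2)
        rw [integral_add h12 h2, integral_sub h1 (h3.const_mul 2)]
    _ = _ := by
        rw [integral_const_mul, integral_mul_avg ν i hg hg2]; ring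

end avg

section comm

variable {𝒳 : Type*} [MeasurableSpace 𝒳] {n : ℕ}
  (ν : Fin n → Measure 𝒳) [∀ i, IsProbabilityMeasure (ν i)]

variable {g h : (Fin n → 𝒳) → ℝ}

theorem mp_update2 (i j : Fin n) :
    MeasurePreserving
      (fun q : (Fin n → 𝒳) × (𝒳 × 𝒳) =>
        Function.update (Function.update q.1 i q.2.1) j q.2.2)
      ((Measure.pi ν).prod ((ν i).prod (ν j))) (Measure.pi ν) := by
  have m0 : MeasurePreserving (MeasurableEquiv.prodAssoc.symm)
      ((Measure.pi ν).prod ((ν i).prod (ν j))) (((Measure.pi ν).prod (ν i)).prod (ν j)) :=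
    MeasurePreserving.symm _ (measurePreserving_prodAssoc (Measure.pi ν) (ν i) (ν j))
  have m1 : MeasurePreserving
      (Prod.map (fun p : (Fin n → 𝒳) × 𝒳 => Function.update p.1 i p.2) (id : 𝒳 → 𝒳))
      (((Measure.pi ν).prod (ν i)).prod (ν j)) ((Measure.pi ν).prod (ν j)) :=
    (mp_update ν i).prod (MeasurePreserving.id (ν j))
  exact ((mp_update ν j).comp (m1.comp m0) : _)

theorem slice_integrable (i : Fin n) (hg2 : MemLp g 2 (Measure.pi ν)) :
    ∀ᵐ x ∂(Measure.pi ν), Integrable (fun y => g (Function.update x i y)) (ν i) :=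
  ((memℒp_comp_update ν i hg2).integrable one_le_two).prod_right_ae

theorem avg_comm (i j : Fin n) (hij : i ≠ j) (hg : Measurable g)
    (hg2 : MemLp g 2 (Measure.pi ν)) :
    ∀ᵐ x ∂(Measure.pi ν), avg ν i (avg ν j g) x = avg ν j (avg ν i g) x := by
  have hint : Integrable
      (fun q : (Fin n → 𝒳) × (𝒳 × 𝒳) =>
        g (Function.update (Function.update q.1 i q.2.1) j q.2.2))
      ((Measure.pi ν).prod ((ν i).prod (ν j))) := by
    rw [← memLp_one_iff_integrable]
    exact (hg2.mono_exponent one_le_two).comp_measurePreserving (mp_update2 ν i j)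
  filter_upwards [hint.prod_right_ae] with x hx
  calc avg ν i (avg ν j g) x
      = ∫ y, ∫ z, g (Function.update (Function.update x i y) j z) ∂(ν j) ∂(ν i) := by
        simp only [avg]
    _ = ∫ z, ∫ y, g (Function.update (Function.update x i y) j z) ∂(ν i) ∂(ν j) :=
        integral_integral_swap hx
    _ = avg ν j (avg ν i g) x := by
        simp only [avg, Function.update_comm hij]

theorem avg_sub_ae (i : Fin n) (hg2 : MemLp g 2 (Measure.pi ν))
    (hh2 : MemLp h 2 (Measure.pi ν)) :
    ∀ᵐ x ∂(Measure.pi ν),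
      avg ν i (fun w => g w - h w) x = avg ν i g x - avg ν i h x := by
  filter_upwards [slice_integrable ν i hg2, slice_integrable ν i hh2] with x h1 h2
  exact integral_sub h1 h2

/-- The key one-step contraction. -/
theorem avg_step (i j : Fin n) (hij : i ≠ j) (hh : Measurable h)
    (hh2 : MemLp h 2 (Measure.pi ν)) :
    ∫ x, (avg ν j h x - avg ν i (avg ν j h) x) ^ 2 ∂(Measure.pi ν)
      ≤ ∫ x, (h x - avg ν i h x) ^ 2 ∂(Measure.pi ν) := by
  have hφm : Measurable (fun w => h w - avg ν i h w) := hh.sub (avg_measurable ν i hh)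
  have hmemi := (avg_memℒp_and_le ν i hh hh2).1
  have hφ2 : MemLp (fun w => h w - avg ν i h w) 2 (Measure.pi ν) := by
    have := hh2.sub hmemi
    simpa [Pi.sub_def] using this
  have hkey : ∀ᵐ x ∂(Measure.pi ν),
      avg ν j h x - avg ν i (avg ν j h) x = avg ν j (fun w => h w - avg ν i h w) x := by
    filter_upwards [avg_comm ν i j hij hh hh2, avg_sub_ae ν j hh2 hmemi] with x h1 h2
    rw [h1, h2]
  calc ∫ x, (avg ν j h x - avg ν i (avg ν j h) x) ^ 2 ∂(Measure.pi ν)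
      = ∫ x, (avg ν j (fun w => h w - avg ν i h w) x) ^ 2 ∂(Measure.pi ν) :=
        integral_congr_ae (hkey.mono fun x hx => by simp only []; rw [hx])
    _ ≤ ∫ x, (h x - avg ν i h x) ^ 2 ∂(Measure.pi ν) :=
        (avg_memℒp_and_le ν j hφm hφ2).2

end comm

section iter

variable {𝒳 : Type*} [MeasurableSpace 𝒳] {n : ℕ}
  (ν : Fin n → Measure 𝒳) [∀ i, IsProbabilityMeasure (ν i)]

variable {f : (Fin n → 𝒳) → ℝ}

/-- Iterated averaging over a list of coordinates. -/
noncomputable def iavg (l : List (Fin n)) (f : (Fin n → 𝒳) → ℝ) : (Fin n → 𝒳) → ℝ :=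
  l.foldr (fun j h => avg ν j h) f

@[simp] theorem iavg_nil : iavg ν ([] : List (Fin n)) f = f := rfl

@[simp] theorem iavg_cons (j : Fin n) (l : List (Fin n)) :
    iavg ν (j :: l) f = avg ν j (iavg ν l f) := rfl

theorem iavg_measurable (hf : Measurable f) :
    ∀ l : List (Fin n), Measurable (iavg ν l f)
  | [] => hf
  | j :: l => avg_measurable ν j (iavg_measurable hf l)

theorem iavg_memℒp (hf : Measurable f) (hf2 : MemLp f 2 (Measure.pi ν)) :
    ∀ l : List (Fin n), MemLp (iavg ν l f) 2 (Measure.pi ν)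
  | [] => hf2
  | j :: l => (avg_memℒp_and_le ν j (iavg_measurable ν hf l) (iavg_memℒp hf hf2 l)).1

theorem integral_iavg (hf : Measurable f) (hf2 : MemLp f 2 (Measure.pi ν)) :
    ∀ l : List (Fin n), ∫ x, iavg ν l f x ∂(Measure.pi ν) = ∫ x, f x ∂(Measure.pi ν)
  | [] => rfl
  | j :: l => by
    have hint : Integrable (iavg ν l f) (Measure.pi ν) :=
      (iavg_memℒp ν hf hf2 l).integrable one_le_two
    have := (integral_avg_eq ν j hint).symm
    calc ∫ x, iavg ν (j :: l) f x ∂(Measure.pi ν)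
        = ∫ x, iavg ν l f x ∂(Measure.pi ν) := this
      _ = ∫ x, f x ∂(Measure.pi ν) := integral_iavg hf hf2 l

theorem iavg_contract (i : Fin n) (hf : Measurable f) (hf2 : MemLp f 2 (Measure.pi ν)) :
    ∀ l : List (Fin n), i ∉ l →
      ∫ x, (iavg ν l f x - avg ν i (iavg ν l f) x) ^ 2 ∂(Measure.pi ν)
        ≤ ∫ x, (f x - avg ν i f x) ^ 2 ∂(Measure.pi ν)
  | [], _ => le_refl _
  | j :: l, hmem => by
    have hij : i ≠ j := fun h => hmem (h ▸ List.mem_cons_self (a := j) (l := l))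
    have h1 := avg_step ν i j hij (iavg_measurable ν hf l) (iavg_memℒp ν hf hf2 l)
    have h2 := iavg_contract i hf hf2 l (fun h => hmem (List.mem_cons_of_mem j h))
    calc ∫ x, (iavg ν (j :: l) f x - avg ν i (iavg ν (j :: l) f) x) ^ 2 ∂(Measure.pi ν)
        ≤ ∫ x, (iavg ν l f x - avg ν i (iavg ν l f) x) ^ 2 ∂(Measure.pi ν) := h1
      _ ≤ _ := h2

theorem iavg_bound (hf : Measurable f) (hf2 : MemLp f 2 (Measure.pi ν)) :
    ∀ l : List (Fin n), l.Nodup →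
      ∫ x, f x ^ 2 ∂(Measure.pi ν) - ∫ x, (iavg ν l f x) ^ 2 ∂(Measure.pi ν)
        ≤ (l.map fun j => ∫ x, (f x - avg ν j f x) ^ 2 ∂(Measure.pi ν)).sum
  | [], _ => by simp
  | j :: l, hnd => by
    obtain ⟨hj, hl⟩ := List.nodup_cons.mp hnd
    have ihm := iavg_measurable ν hf l
    have ih2 := iavg_memℒp ν hf hf2 l
    have hproj := integral_sub_avg_sq ν j ihm ih2
    have hcontr := iavg_contract ν j hf hf2 l hj
    have ih := iavg_bound hf hf2 l hl
    have : ∫ x, (iavg ν l f x) ^ 2 ∂(Measure.pi ν)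
        - ∫ x, (avg ν j (iavg ν l f) x) ^ 2 ∂(Measure.pi ν)
        ≤ ∫ x, (f x - avg ν j f x) ^ 2 ∂(Measure.pi ν) := by
      rw [← hproj]; exact hcontr
    simp only [iavg_cons, List.map_cons, List.sum_cons]
    linarith

theorem iavg_congr :
    ∀ (l : List (Fin n)) (x x' : Fin n → 𝒳), (∀ j, j ∉ l → x j = x' j) →
      iavg ν l f x = iavg ν l f x'
  | [], x, x', hxx => by
    have : x = x' := funext fun j => hxx j List.not_mem_nil
    rw [this]
  | j :: l, x, x', hxx => by
    simp only [iavg_cons, avg]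
    refine integral_congr_ae (Filter.Eventually.of_forall fun y => ?_)
    refine iavg_congr l _ _ fun j' hj' => ?_
    rcases eq_or_ne j' j with rfl | hne
    · simp
    · rw [Function.update_of_ne hne, Function.update_of_ne hne]
      exact hxx j' (by simp [hne, hj'])

theorem iavg_finRange_sq (hf : Measurable f) (hf2 : MemLp f 2 (Measure.pi ν)) :
    ∫ x, (iavg ν (List.finRange n) f x) ^ 2 ∂(Measure.pi ν)
      = (∫ x, f x ∂(Measure.pi ν)) ^ 2 := by
  have hne : Nonempty (Fin n → 𝒳) := by
    by_contra hne
    have h1 : (Measure.pi ν) univ = 1 := measure_univ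
    rw [Set.univ_eq_empty_iff.mpr (not_nonempty_iff.mp hne)] at h1
    simp at h1
  obtain ⟨x₀⟩ := hne
  have hconst : ∀ x, iavg ν (List.finRange n) f x = iavg ν (List.finRange n) f x₀ :=
    fun x => iavg_congr ν _ x x₀ (fun j hj => absurd (List.mem_finRange j) hj)
  have h1 : ∫ x, iavg ν (List.finRange n) f x ∂(Measure.pi ν)
      = iavg ν (List.finRange n) f x₀ := by
    rw [show (fun x => iavg ν (List.finRange n) f x) = fun _ => iavg ν (List.finRange n) f x₀
      from funext hconst]
    simp [integral_const]
  have h2 : ∫ x, f x ∂(Measure.pi ν) = iavg ν (List.finRange n) f x₀ := by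
    rw [← integral_iavg ν hf hf2 (List.finRange n), h1]
  rw [h2]
  rw [show (fun x => (iavg ν (List.finRange n) f x) ^ 2)
      = fun _ => (iavg ν (List.finRange n) f x₀) ^ 2 from funext fun x => by rw [hconst x]]
  simp [integral_const]

end iter

/-- The Efron–Stein inequality: for independent random variables `X₁,…,Xₙ` and a
square-integrable `Z = f(X₁,…,Xₙ)`,
`Var(Z) ≤ (1/2) ∑ᵢ E[(Z − Z'ᵢ)²]`, where `Z'ᵢ = f(X₁,…,X'ᵢ,…,Xₙ)` and the `X'ᵢ` are
independent copies of the `Xᵢ`. -/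
theorem efron_stein {𝒳 : Type*} [MeasurableSpace 𝒳] (n : ℕ)
    (ν : Fin n → Measure 𝒳) [∀ i, IsProbabilityMeasure (ν i)]
    (f : (Fin n → 𝒳) → ℝ) (hf : Measurable f)
    (hf2 : MemLp f 2 (Measure.pi ν)) :
    variance (fun ω : (Fin n → 𝒳) × (Fin n → 𝒳) => f ω.1)
        ((Measure.pi ν).prod (Measure.pi ν)) ≤
      (1 : ℝ) / 2 * ∑ i : Fin n,
        ∫ ω, (f ω.1 - f (Function.update ω.1 i (ω.2 i))) ^ 2
          ∂((Measure.pi ν).prod (Measure.pi ν)) := by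
  have mpfst : MeasurePreserving (Prod.fst)
      ((Measure.pi ν).prod (Measure.pi ν)) (Measure.pi ν) :=
    ⟨measurable_fst, by rw [Measure.map_fst_prod, measure_univ, one_smul]⟩
  have hffst : MemLp (fun ω : (Fin n → 𝒳) × (Fin n → 𝒳) => f ω.1) 2
      ((Measure.pi ν).prod (Measure.pi ν)) := hf2.comp_measurePreserving mpfst
  -- the variance in the product space equals the variance in the base space
  have hvar : variance (fun ω : (Fin n → 𝒳) × (Fin n → 𝒳) => f ω.1)
      ((Measure.pi ν).prod (Measure.pi ν))
      = ∫ x, f x ^ 2 ∂(Measure.pi ν) - (∫ x, f x ∂(Measure.pi ν)) ^ 2 := by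
    rw [variance_eq_sub hffst]
    congr 1
    · have hp : ((fun ω : (Fin n → 𝒳) × (Fin n → 𝒳) => f ω.1) ^ 2)
          = fun ω : (Fin n → 𝒳) × (Fin n → 𝒳) => (fun x => f x ^ 2) ω.1 := by
        funext ω; simp
      rw [hp]
      exact mpfst.integral_comp'' (hf.pow_const 2).aestronglyMeasurable
    · congr 1
      exact mpfst.integral_comp'' hf.aestronglyMeasurable
  -- each summand equals `2 ∫ (f - avg i f)²`
  have hterm : ∀ i : Fin n,
      ∫ ω, (f ω.1 - f (Function.update ω.1 i (ω.2 i))) ^ 2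
          ∂((Measure.pi ν).prod (Measure.pi ν))
        = 2 * ∫ x, (f x - avg ν i f x) ^ 2 ∂(Measure.pi ν) := by
    intro i
    have mpΦ : MeasurePreserving
        (Prod.map (id : (Fin n → 𝒳) → (Fin n → 𝒳)) (fun y : Fin n → 𝒳 => y i))
        ((Measure.pi ν).prod (Measure.pi ν)) ((Measure.pi ν).prod (ν i)) :=
      (MeasurePreserving.id _).prod (mp_eval ν i)
    have hGmeas : Measurable
        (fun p : (Fin n → 𝒳) × 𝒳 => (f p.1 - f (Function.update p.1 i p.2)) ^ 2) :=
      ((hf.comp measurable_fst).sub (hf.comp measurable_update')).pow_const 2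
    have e1 : ∫ ω, (f ω.1 - f (Function.update ω.1 i (ω.2 i))) ^ 2
          ∂((Measure.pi ν).prod (Measure.pi ν))
        = ∫ p, (f p.1 - f (Function.update p.1 i p.2)) ^ 2 ∂((Measure.pi ν).prod (ν i)) :=
      mpΦ.integral_comp'' hGmeas.aestronglyMeasurable
    have mpfst' : MeasurePreserving (Prod.fst)
        ((Measure.pi ν).prod (ν i)) (Measure.pi ν) :=
      ⟨measurable_fst, by rw [Measure.map_fst_prod, measure_univ, one_smul]⟩
    have hF1 : MemLp (fun p : (Fin n → 𝒳) × 𝒳 => f p.1) 2 ((Measure.pi ν).prod (ν i)) :=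
      hf2.comp_measurePreserving mpfst'
    have hF2 : MemLp (fun p : (Fin n → 𝒳) × 𝒳 => f (Function.update p.1 i p.2)) 2
        ((Measure.pi ν).prod (ν i)) := memℒp_comp_update ν i hf2
    have hI1 := hF1.integrable_sq
    have hI2 := hF2.integrable_sq
    have hI3 : Integrable (fun p : (Fin n → 𝒳) × 𝒳 => f p.1 * f (Function.update p.1 i p.2))
        ((Measure.pi ν).prod (ν i)) := integrable_mul_of_L2 hF1 hF2
    have expand : ∀ p : (Fin n → 𝒳) × 𝒳,
        (f p.1 - f (Function.update p.1 i p.2)) ^ 2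
          = f p.1 ^ 2 - 2 * (f p.1 * f (Function.update p.1 i p.2))
            + f (Function.update p.1 i p.2) ^ 2 := fun p => by ring
    have c1 : ∫ p, f p.1 ^ 2 ∂((Measure.pi ν).prod (ν i)) = ∫ x, f x ^ 2 ∂(Measure.pi ν) :=
      mpfst'.integral_comp'' (hf.pow_const 2).aestronglyMeasurable
    have c2 : ∫ p, f (Function.update p.1 i p.2) ^ 2 ∂((Measure.pi ν).prod (ν i))
        = ∫ x, f x ^ 2 ∂(Measure.pi ν) :=
      (mp_update ν i).integral_comp'' (hf.pow_const 2).aestronglyMeasurable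
    have c3 : ∫ p, f p.1 * f (Function.update p.1 i p.2) ∂((Measure.pi ν).prod (ν i))
        = ∫ x, f x * avg ν i f x ∂(Measure.pi ν) := by
      rw [integral_prod _ hI3]
      refine integral_congr_ae (Filter.Eventually.of_forall fun x => ?_)
      show ∫ y, f x * f (Function.update x i y) ∂(ν i) = f x * avg ν i f x
      exact integral_const_mul _ _
    have c4 := integral_mul_avg ν i hf hf2
    have havg := integral_sub_avg_sq ν i hf hf2
    have e2 : ∫ p, (f p.1 - f (Function.update p.1 i p.2)) ^ 2 ∂((Measure.pi ν).prod (ν i))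
        = ∫ x, f x ^ 2 ∂(Measure.pi ν) - 2 * ∫ x, (avg ν i f x) ^ 2 ∂(Measure.pi ν)
          + ∫ x, f x ^ 2 ∂(Measure.pi ν) := by
      have h12 : Integrable
          (fun p : (Fin n → 𝒳) × 𝒳 =>
            f p.1 ^ 2 - 2 * (f p.1 * f (Function.update p.1 i p.2)))
          ((Measure.pi ν).prod (ν i)) := hI1.sub (hI3.const_mul 2)
      calc ∫ p, (f p.1 - f (Function.update p.1 i p.2)) ^ 2 ∂((Measure.pi ν).prod (ν i))
          = ∫ p, (f p.1 ^ 2 - 2 * (f p.1 * f (Function.update p.1 i p.2))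
              + f (Function.update p.1 i p.2) ^ 2) ∂((Measure.pi ν).prod (ν i)) := by
            simp only [expand]
        _ = (∫ p, f p.1 ^ 2 ∂((Measure.pi ν).prod (ν i))
              - ∫ p, 2 * (f p.1 * f (Function.update p.1 i p.2)) ∂((Measure.pi ν).prod (ν i)))
            + ∫ p, f (Function.update p.1 i p.2) ^ 2 ∂((Measure.pi ν).prod (ν i)) := by
            rw [integral_add h12 hI2, integral_sub hI1 (hI3.const_mul 2)]
        _ = _ := by
            rw [integral_const_mul, c1, c2, c3, c4]
    rw [e1, e2, havg]; ring
  -- the main bound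
  have hkey : ∫ x, f x ^ 2 ∂(Measure.pi ν) - (∫ x, f x ∂(Measure.pi ν)) ^ 2
      ≤ ∑ i : Fin n, ∫ x, (f x - avg ν i f x) ^ 2 ∂(Measure.pi ν) := by
    have hb := iavg_bound ν hf hf2 (List.finRange n) (List.nodup_finRange n)
    rw [iavg_finRange_sq ν hf hf2] at hb
    rw [Fin.sum_univ_def]
    exact hb
  rw [hvar]
  have hsum : ∑ i : Fin n,
      ∫ ω, (f ω.1 - f (Function.update ω.1 i (ω.2 i))) ^ 2
        ∂((Measure.pi ν).prod (Measure.pi ν))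
      = ∑ i : Fin n, 2 * ∫ x, (f x - avg ν i f x) ^ 2 ∂(Measure.pi ν) :=
    Finset.sum_congr rfl fun i _ => hterm i
  rw [hsum, ← Finset.mul_sum]
  linarith
end

section
/- With e uniform over subsets of {1,…,n} of size n−p and V_k^e(Xᵢ) the k nearest neighbors of Xᵢ among indexed-by-e points, let σᵢ(j) denote the rank of Xⱼ as a neighbor of Xᵢ in the full sample. Then ∑_{j : k < σᵢ(j) ≤ k+p} P(i ∉ e, j ∈ V_k^e(Xᵢ)) = (kp/n) · (p−1)/(n−1). -/
set_option autoImplicit false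

open Finset

/-- `j` is one of the `k` nearest neighbors of the point `X i` among the points indexed by
`e`: `j ∈ e` and fewer than `k` points of `e` are strictly closer to `X i` than `X j`. -/
def IsKNN {n d : ℕ} (X : Fin n → EuclideanSpace ℝ (Fin d)) (k : ℕ)
    (e : Finset (Fin n)) (i j : Fin n) : Prop :=
  j ∈ e ∧ (e.filter (fun l => dist (X i) (X l) < dist (X i) (X j))).card < k

/-- The rank `σᵢ(j)` of `X j` as a neighbor of `X i` in the full sample: the number of
indices `l ≠ i` with `dist (X i) (X l) ≤ dist (X i) (X j)` (so the nearest neighbor has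
rank 1). -/
noncomputable def nnRank {n d : ℕ} (X : Fin n → EuclideanSpace ℝ (Fin d))
    (i j : Fin n) : ℕ :=
  ((Finset.univ : Finset (Fin n)).filter
    (fun l => l ≠ i ∧ dist (X i) (X l) ≤ dist (X i) (X j))).card

open Classical in
lemma localRank_injOn {α : Type*} (s : Finset α) (f : α → ℝ) (hf : Set.InjOn f s) :
    Set.InjOn (fun j => (s.filter (fun l => f l < f j)).card) s := by
  classical
  intro a ha b hb hab
  simp only at hab
  rcases lt_trichotomy (f a) (f b) with h | h | h
  · exfalso
    have hss : s.filter (fun l => f l < f a) ⊂ s.filter (fun l => f l < f b) := by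
      refine Finset.ssubset_iff_of_subset (Finset.monotone_filter_right s ?_) |>.mpr ⟨a, ?_, ?_⟩
      · intro x _ hx; exact lt_trans hx h
      · exact Finset.mem_filter.mpr ⟨Finset.mem_coe.mp ha, h⟩
      · simp
    exact absurd hab (Nat.ne_of_lt (Finset.card_lt_card hss))
  · exact hf ha hb h
  · exfalso
    have hss : s.filter (fun l => f l < f b) ⊂ s.filter (fun l => f l < f a) := by
      refine Finset.ssubset_iff_of_subset (Finset.monotone_filter_right s ?_) |>.mpr ⟨b, ?_, ?_⟩
      · intro x _ hx; exact lt_trans hx h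
      · exact Finset.mem_filter.mpr ⟨Finset.mem_coe.mp hb, h⟩
      · simp
    exact absurd hab (Nat.ne_of_lt (Finset.card_lt_card hss)).symm

open Classical in
lemma localRank_lt {α : Type*} (s : Finset α) (f : α → ℝ) {j : α} (hj : j ∈ s) :
    (s.filter (fun l => f l < f j)).card < s.card := by
  classical
  refine Finset.card_lt_card ?_
  refine Finset.ssubset_iff_of_subset (Finset.filter_subset _ _) |>.mpr ⟨j, hj, ?_⟩
  simp

open Classical in
lemma localRank_image {α : Type*} (s : Finset α) (f : α → ℝ) (hf : Set.InjOn f s) :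
    s.image (fun j => (s.filter (fun l => f l < f j)).card) = range s.card := by
  classical
  apply Finset.eq_of_subset_of_card_le
  · intro m hm
    simp only [mem_image] at hm
    obtain ⟨j, hj, rfl⟩ := hm
    exact mem_range.mpr (localRank_lt s f hj)
  · rw [card_range, Finset.card_image_of_injOn (localRank_injOn s f hf)]

open Classical in
lemma localRank_count {α : Type*} (s : Finset α) (f : α → ℝ) (hf : Set.InjOn f s) (k : ℕ) :
    (s.filter (fun j => (s.filter (fun l => f l < f j)).card < k)).card = min k s.card := by
  classical
  have h1 : ((s.filter (fun j => (s.filter (fun l => f l < f j)).card < k)).image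
      (fun j => (s.filter (fun l => f l < f j)).card)).card
      = (s.filter (fun j => (s.filter (fun l => f l < f j)).card < k)).card :=
    Finset.card_image_of_injOn ((localRank_injOn s f hf).mono (by
      intro x hx; exact Finset.mem_coe.mpr (Finset.filter_subset _ _ (Finset.mem_coe.mp hx))))
  rw [← h1]
  have h2 : (s.filter (fun j => (s.filter (fun l => f l < f j)).card < k)).image
      (fun j => (s.filter (fun l => f l < f j)).card)
      = (s.image (fun j => (s.filter (fun l => f l < f j)).card)).filter (fun m => m < k) := by
    exact (Finset.filter_image (f := fun j => (s.filter (fun l => f l < f j)).card)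
      (s := s) (p := fun m => m < k)).symm
  rw [h2, localRank_image s f hf]
  have h3 : (range s.card).filter (fun m => m < k) = range (min k s.card) := by
    ext m; simp [Nat.lt_min, and_comm]
  rw [h3, card_range]

open Classical in
lemma count_powersetCard_mem {α : Type*} [DecidableEq α] (s : Finset α) (j : α) (hj : j ∈ s)
    (m : ℕ) (hm : 1 ≤ m) :
    ((s.powersetCard m).filter (fun e => j ∈ e)).card = (s.erase j).card.choose (m - 1) := by
  classical
  rw [← Finset.card_powersetCard]
  refine Finset.card_bij' (fun e _ => e.erase j) (fun t _ => insert j t) ?_ ?_ ?_ ?_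
  · intro e he
    simp only [mem_filter, mem_powersetCard] at he
    obtain ⟨⟨hsub, hcard⟩, hje⟩ := he
    rw [mem_powersetCard]
    exact ⟨Finset.erase_subset_erase j hsub, by rw [card_erase_of_mem hje, hcard]⟩
  · intro t ht
    simp only [mem_powersetCard] at ht
    obtain ⟨hsub, hcard⟩ := ht
    have hjt : j ∉ t := fun h => (Finset.mem_erase.mp (hsub h)).1 rfl
    simp only [mem_filter, mem_powersetCard]
    refine ⟨⟨?_, ?_⟩, mem_insert_self j t⟩
    · intro x hx
      rcases Finset.mem_insert.mp hx with rfl | hx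
      · exact hj
      · exact Finset.erase_subset j s (hsub hx)
    · rw [Finset.card_insert_of_notMem hjt, hcard]; omega
  · intro e he
    simp only [mem_filter] at he
    exact Finset.insert_erase he.2
  · intro t ht
    simp only [mem_powersetCard] at ht
    have hjt : j ∉ t := fun h => (Finset.mem_erase.mp (ht.1 h)).1 rfl
    exact Finset.erase_insert hjt

open Classical in
/-- For a uniformly random training set `e` of cardinality `n−p`, the sum over those `j`
whose full-sample rank `σᵢ(j)` satisfies `k < σᵢ(j) ≤ k+p` of
`P(i ∉ e, j ∈ V_k^e(X i))` equals `(kp/n)·(p−1)/(n−1)`. -/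
theorem sum_faraway_knn_probabilities (n d p k : ℕ) (hp : 1 ≤ p) (hk : 1 ≤ k)
    (hkpn : k + p ≤ n) (X : Fin n → EuclideanSpace ℝ (Fin d))
    (hgen : ∀ i j l : Fin n, j ≠ l → dist (X i) (X j) ≠ dist (X i) (X l))
    (i : Fin n) :
    (∑ j ∈ (Finset.univ : Finset (Fin n)).filter
        (fun j => k < nnRank X i j ∧ nnRank X i j ≤ k + p),
        (((((Finset.univ : Finset (Fin n)).powersetCard (n - p)).filter
          (fun e => i ∉ e ∧ IsKNN X k e i j)).card : ℝ))) / (n.choose (n - p) : ℝ) =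
      ((k : ℝ) * p / n) * (((p : ℝ) - 1) / ((n : ℝ) - 1)) := by
  classical
  have hn2 : 2 ≤ n := by omega
  set J : Finset (Fin n) := (Finset.univ : Finset (Fin n)).filter
    (fun j => k < nnRank X i j ∧ nnRank X i j ≤ k + p) with hJdef
  have hdinjOn : ∀ t : Finset (Fin n), Set.InjOn (fun l => dist (X i) (X l)) t := by
    intro t a _ b _ h
    by_contra hne
    exact hgen i a b hne h
  have hscard : ((univ : Finset (Fin n)).erase i).card = n - 1 := by
    rw [Finset.card_erase_of_mem (mem_univ i), Finset.card_univ, Fintype.card_fin]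
  -- rank formula
  have hrank : ∀ j : Fin n, j ≠ i → nnRank X i j =
      (((univ : Finset (Fin n)).erase i).filter
        (fun l => dist (X i) (X l) < dist (X i) (X j))).card + 1 := by
    intro j hji
    have hset : ((univ : Finset (Fin n)).filter
        (fun l => l ≠ i ∧ dist (X i) (X l) ≤ dist (X i) (X j)))
        = insert j (((univ : Finset (Fin n)).erase i).filter
          (fun l => dist (X i) (X l) < dist (X i) (X j))) := by
      ext l
      constructor
      · intro hmem
        obtain ⟨-, hl, hle⟩ := Finset.mem_filter.mp hmem
        rcases lt_or_eq_of_le hle with h | h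
        · exact Finset.mem_insert.mpr (Or.inr (Finset.mem_filter.mpr
            ⟨Finset.mem_erase.mpr ⟨hl, Finset.mem_univ l⟩, h⟩))
        · refine Finset.mem_insert.mpr (Or.inl ?_)
          by_contra hlj
          exact hgen i l j hlj h
      · intro hmem
        rcases Finset.mem_insert.mp hmem with rfl | hmem2
        · exact Finset.mem_filter.mpr ⟨Finset.mem_univ _, hji, le_refl _⟩
        · obtain ⟨hl, hlt⟩ := Finset.mem_filter.mp hmem2
          exact Finset.mem_filter.mpr
            ⟨Finset.mem_univ _, (Finset.mem_erase.mp hl).1, le_of_lt hlt⟩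
    rw [nnRank, hset, Finset.card_insert_of_notMem (by simp)]
  -- the set of the k nearest full-sample neighbors
  set R : Finset (Fin n) := ((univ : Finset (Fin n)).erase i).filter
    (fun j => nnRank X i j ≤ k) with hRdef
  have hRcard : R.card = k := by
    have hcongr : R = ((univ : Finset (Fin n)).erase i).filter (fun j =>
        ((((univ : Finset (Fin n)).erase i).filter
          (fun l => dist (X i) (X l) < dist (X i) (X j))).card) < k) := by
      rw [hRdef]
      apply Finset.filter_congr
      intro j hj
      rw [hrank j (Finset.mem_erase.mp hj).1]
      constructor <;> intro h <;> omega
    rw [hcongr, localRank_count _ _ (hdinjOn _), hscard]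
    omega
  -- the per-training-set key identity
  have key : ∀ e : Finset (Fin n), e ⊆ (univ : Finset (Fin n)).erase i → e.card = n - p →
      (J.filter (fun j => IsKNN X k e i j)).card + (e ∩ R).card = k := by
    intro e hsub hecard
    have hie : i ∉ e := fun h => (Finset.mem_erase.mp (hsub h)).1 rfl
    set KNNe : Finset (Fin n) := (univ : Finset (Fin n)).filter
      (fun j => IsKNN X k e i j) with hKNNdef
    have hKNNeq : KNNe = e.filter (fun j =>
        (e.filter (fun l => dist (X i) (X l) < dist (X i) (X j))).card < k) := by
      ext j
      rw [hKNNdef, Finset.mem_filter, Finset.mem_filter]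
      simp [IsKNN]
    have hKNNcard : KNNe.card = k := by
      rw [hKNNeq, localRank_count _ _ (hdinjOn _), hecard]
      omega
    have hbound : ∀ j : Fin n, IsKNN X k e i j → nnRank X i j ≤ k + p := by
      intro j hknn
      obtain ⟨hje, hcard⟩ := hknn
      have hji : j ≠ i := fun h => hie (h ▸ hje)
      have hsplit : (((univ : Finset (Fin n)).erase i).filter
          (fun l => dist (X i) (X l) < dist (X i) (X j)))
          ⊆ (e.filter (fun l => dist (X i) (X l) < dist (X i) (X j)))
            ∪ (((univ : Finset (Fin n)).erase i) \ e) := by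
        intro l hl
        obtain ⟨hls, hld⟩ := Finset.mem_filter.mp hl
        by_cases hle : l ∈ e
        · exact Finset.mem_union_left _ (Finset.mem_filter.mpr ⟨hle, hld⟩)
        · exact Finset.mem_union_right _ (Finset.mem_sdiff.mpr ⟨hls, hle⟩)
      have hsd : (((univ : Finset (Fin n)).erase i) \ e).card = p - 1 := by
        rw [Finset.card_sdiff_of_subset hsub, hscard, hecard]
        omega
      have hle1 : (((univ : Finset (Fin n)).erase i).filter
          (fun l => dist (X i) (X l) < dist (X i) (X j))).card ≤ (k - 1) + (p - 1) := by
        calc _ ≤ ((e.filter (fun l => dist (X i) (X l) < dist (X i) (X j)))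
              ∪ (((univ : Finset (Fin n)).erase i) \ e)).card := Finset.card_le_card hsplit
          _ ≤ (e.filter (fun l => dist (X i) (X l) < dist (X i) (X j))).card
              + (((univ : Finset (Fin n)).erase i) \ e).card := Finset.card_union_le _ _
          _ ≤ (k - 1) + (p - 1) := by rw [hsd]; omega
      rw [hrank j hji]
      omega
    have hsplit1 : J.filter (fun j => IsKNN X k e i j)
        = KNNe.filter (fun j => k < nnRank X i j) := by
      ext j
      simp only [hJdef, hKNNdef, Finset.mem_filter, Finset.mem_univ, true_and]
      constructor
      · rintro ⟨⟨h1, _⟩, h2⟩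
        exact ⟨h2, h1⟩
      · rintro ⟨h1, h2⟩
        exact ⟨⟨h2, hbound j h1⟩, h1⟩
    have hsplit2 : KNNe.filter (fun j => ¬ k < nnRank X i j) = e ∩ R := by
      ext j
      simp only [hKNNdef, hRdef, Finset.mem_filter, Finset.mem_univ, true_and,
        Finset.mem_inter, Finset.mem_erase, not_lt]
      constructor
      · rintro ⟨hknn, hle⟩
        exact ⟨hknn.1, ⟨fun h => hie (h ▸ hknn.1), trivial⟩, hle⟩
      · rintro ⟨hje, ⟨hji, -⟩, hle⟩
        refine ⟨⟨hje, ?_⟩, hle⟩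
        have hsub2 : (e.filter (fun l => dist (X i) (X l) < dist (X i) (X j)))
            ⊆ (((univ : Finset (Fin n)).erase i).filter
              (fun l => dist (X i) (X l) < dist (X i) (X j))) :=
          Finset.filter_subset_filter _ hsub
        have := Finset.card_le_card hsub2
        have hr := hrank j hji
        omega
    have htot := Finset.card_filter_add_card_filter_not
      (s := KNNe) (p := fun j => k < nnRank X i j)
    rw [hsplit2, hKNNcard] at htot
    rw [hsplit1]
    exact htot
  -- rewrite the summand sets
  set E' : Finset (Finset (Fin n)) := ((univ : Finset (Fin n)).erase i).powersetCard (n - p)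
    with hE'def
  have hEfilter : ∀ j : Fin n,
      (((univ : Finset (Fin n)).powersetCard (n - p)).filter
        (fun e => i ∉ e ∧ IsKNN X k e i j))
      = E'.filter (fun e => IsKNN X k e i j) := by
    intro j
    ext e
    simp only [hE'def, Finset.mem_filter, Finset.mem_powersetCard, Finset.subset_erase]
    constructor
    · rintro ⟨⟨h1, h2⟩, h3, h4⟩
      exact ⟨⟨⟨h1, h3⟩, h2⟩, h4⟩
    · rintro ⟨⟨⟨h1, h3⟩, h2⟩, h4⟩
      exact ⟨⟨h1, h2⟩, h3, h4⟩
  have hE'mem : ∀ e ∈ E', e ⊆ (univ : Finset (Fin n)).erase i ∧ e.card = n - p := by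
    intro e he
    exact Finset.mem_powersetCard.mp he
  have hE'card : E'.card = (n - 1).choose (n - p) := by
    rw [hE'def, Finset.card_powersetCard, hscard]
  set N : ℕ := ∑ j ∈ J, (E'.filter (fun e => IsKNN X k e i j)).card with hNdef
  -- double counting
  have hswap : N = ∑ e ∈ E', (J.filter (fun j => IsKNN X k e i j)).card := by
    rw [hNdef]
    simp_rw [Finset.card_filter]
    exact Finset.sum_comm
  have hsum1 : N + ∑ e ∈ E', (e ∩ R).card = E'.card * k := by
    rw [hswap, ← Finset.sum_add_distrib]
    rw [Finset.sum_congr rfl (fun e he => key e (hE'mem e he).1 (hE'mem e he).2)]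
    rw [Finset.sum_const, smul_eq_mul]
  have hsum2 : ∑ e ∈ E', (e ∩ R).card = k * ((n - 2).choose (n - p - 1)) := by
    have hib : ∀ e : Finset (Fin n), (e ∩ R).card = (R.filter (fun j => j ∈ e)).card := by
      intro e
      congr 1
      ext j
      simp [Finset.mem_inter, and_comm]
    simp_rw [hib, Finset.card_filter]
    rw [Finset.sum_comm]
    simp_rw [← Finset.card_filter]
    have hcount : ∀ j ∈ R, (E'.filter (fun e => j ∈ e)).card = (n - 2).choose (n - p - 1) := by
      intro j hj
      have hjs : j ∈ (univ : Finset (Fin n)).erase i := Finset.mem_filter.mp hj |>.1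
      rw [hE'def, count_powersetCard_mem _ j hjs _ (by omega)]
      congr 1
      rw [Finset.card_erase_of_mem hjs, hscard]
      omega
    rw [Finset.sum_congr rfl hcount, Finset.sum_const, smul_eq_mul, hRcard]
  have hpascal : (n - 1).choose (n - p) = (n - 2).choose (n - p - 1) + (n - 2).choose (n - p) := by
    have h := Nat.choose_succ_succ (n - 2) (n - p - 1)
    simp only [Nat.succ_eq_add_one] at h
    rw [show n - 2 + 1 = n - 1 by omega, show n - p - 1 + 1 = n - p by omega] at h
    exact h
  have hNval : N = k * ((n - 2).choose (n - p)) := by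
    have h : N + k * ((n - 2).choose (n - p - 1))
        = k * ((n - 2).choose (n - p)) + k * ((n - 2).choose (n - p - 1)) := by
      calc N + k * ((n - 2).choose (n - p - 1)) = N + ∑ e ∈ E', (e ∩ R).card := by rw [hsum2]
        _ = E'.card * k := hsum1
        _ = ((n - 2).choose (n - p - 1) + (n - 2).choose (n - p)) * k := by
            rw [hE'card, hpascal]
        _ = k * ((n - 2).choose (n - p)) + k * ((n - 2).choose (n - p - 1)) := by ring
    exact Nat.add_right_cancel h
  -- the binomial identity
  have hid : n * ((n - 1) * ((n - 2).choose (n - p))) = p * ((p - 1) * (n.choose (n - p))) := by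
    rcases Nat.lt_or_ge p 2 with hp2 | hp2
    · have hp1 : p = 1 := by omega
      subst hp1
      rw [Nat.choose_eq_zero_of_lt (by omega)]
      simp
    · have e1 : (n - 2).choose (n - p) = (n - 2).choose (p - 2) := by
        rw [show n - p = (n - 2) - (p - 2) by omega, Nat.choose_symm (by omega)]
      have e2 : n.choose (n - p) = n.choose p := Nat.choose_symm (by omega)
      have e3 : n * (n - 1).choose (p - 1) = n.choose p * p := by
        have h := Nat.add_one_mul_choose_eq (n - 1) (p - 1)
        rwa [show n - 1 + 1 = n by omega, show p - 1 + 1 = p by omega] at h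
      have e4 : (n - 1) * (n - 2).choose (p - 2) = (n - 1).choose (p - 1) * (p - 1) := by
        have h := Nat.add_one_mul_choose_eq (n - 2) (p - 2)
        rwa [show n - 2 + 1 = n - 1 by omega, show p - 2 + 1 = p - 1 by omega] at h
      rw [e1, e2]
      calc n * ((n - 1) * (n - 2).choose (p - 2))
          = n * ((n - 1).choose (p - 1) * (p - 1)) := by rw [e4]
        _ = (n * (n - 1).choose (p - 1)) * (p - 1) := by ring
        _ = (n.choose p * p) * (p - 1) := by rw [e3]
        _ = p * ((p - 1) * n.choose p) := by ring
  -- put everything together over ℝ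
  have hLHS : (∑ j ∈ J,
      (((((Finset.univ : Finset (Fin n)).powersetCard (n - p)).filter
        (fun e => i ∉ e ∧ IsKNN X k e i j)).card : ℝ))) = (N : ℝ) := by
    rw [hNdef]
    push_cast
    exact Finset.sum_congr rfl (fun j _ => by rw [hEfilter j])
  rw [hLHS]
  rw [show (N : ℝ) = (k : ℝ) * (((n - 2).choose (n - p) : ℕ) : ℝ) by exact_mod_cast hNval]
  have hidR : (n : ℝ) * (((n : ℝ) - 1) * (((n - 2).choose (n - p) : ℕ) : ℝ))
      = (p : ℝ) * (((p : ℝ) - 1) * ((n.choose (n - p) : ℕ) : ℝ)) := by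
    have h := congrArg (Nat.cast : ℕ → ℝ) hid
    push_cast [Nat.cast_sub (show 1 ≤ n by omega), Nat.cast_sub hp] at h
    linear_combination h
  have hC0 : (0 : ℝ) < (n.choose (n - p) : ℝ) := by
    exact_mod_cast Nat.choose_pos (by omega : n - p ≤ n)
  have hn0 : (0 : ℝ) < (n : ℝ) := by exact_mod_cast (by omega : 0 < n)
  have hn1 : (0 : ℝ) < (n : ℝ) - 1 := by
    have h1 : (1 : ℝ) < (n : ℝ) := by exact_mod_cast (by omega : 1 < n)
    linarith
  field_simp
  ring_nf
  nlinarith [hidR]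
end

section
/- Let X₁,…,Xₙ be sampled without replacement from a finite population of N elements with values c₁,…,c_N satisfying a < cᵢ < b for all i, and let μ = (1/N)∑ᵢ cᵢ. Then for all t > 0, P(|(1/n)∑ᵢ₌₁ⁿ Xᵢ − μ| ≥ t) ≤ 2 exp(−2nt²/(b−a)²). -/
set_option autoImplicit false

open Finset

private lemma D_pos {p : ℝ} (hp0 : 0 ≤ p) (hp1 : p ≤ 1) (h : ℝ) :
    0 < 1 - p + p * Real.exp h := by
  nlinarith [Real.exp_pos h, mul_nonneg hp0 (Real.exp_pos h).le]

private lemma hoeffding_fn_le {p : ℝ} (hp0 : 0 ≤ p) (hp1 : p ≤ 1) (h : ℝ) :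
    (1 - p) * Real.exp (-p * h) + p * Real.exp ((1 - p) * h) ≤ Real.exp (h ^ 2 / 8) := by
  set D : ℝ → ℝ := fun x => 1 - p + p * Real.exp x with hDdef
  set F : ℝ → ℝ := fun x => x ^ 2 / 8 + p * x - Real.log (D x) with hFdef
  set G : ℝ → ℝ := fun x => x / 4 + p - p * Real.exp x / D x with hGdef
  have hDpos : ∀ x, 0 < D x := D_pos hp0 hp1
  have hDd : ∀ x, HasDerivAt D (p * Real.exp x) x := fun x => by
    simpa [hDdef] using ((Real.hasDerivAt_exp x).const_mul p).const_add (1 - p)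
  have hFd : ∀ x, HasDerivAt F (G x) x := by
    intro x
    have h1 : HasDerivAt (fun x : ℝ => x ^ 2 / 8 + p * x) (x / 4 + p) x := by
      have := ((hasDerivAt_pow 2 x).div_const 8).add ((hasDerivAt_id x).const_mul p)
      have e : x / 4 + p = 2 * x / 8 + p := by ring
      rw [e]; simpa [Pi.add_def] using this
    have h2 : HasDerivAt (fun x => Real.log (D x)) (p * Real.exp x / D x) x :=
      (hDd x).log (hDpos x).ne'
    simpa [hGdef, hFdef, Pi.sub_def] using h1.sub h2
  have hGd : ∀ x, HasDerivAt G (1 / 4 - p * (1 - p) * Real.exp x / (D x) ^ 2) x := by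
    intro x
    have h1 : HasDerivAt (fun x : ℝ => x / 4 + p) (1 / 4) x := by
      simpa using ((hasDerivAt_id x).div_const 4).add_const p
    have h2 : HasDerivAt (fun x => p * Real.exp x / D x)
        ((p * Real.exp x * D x - p * Real.exp x * (p * Real.exp x)) / (D x) ^ 2) x :=
      ((Real.hasDerivAt_exp x).const_mul p).div (hDd x) (hDpos x).ne'
    have e : (p * Real.exp x * D x - p * Real.exp x * (p * Real.exp x)) / (D x) ^ 2
        = p * (1 - p) * Real.exp x / (D x) ^ 2 := by
      rw [hDdef]; ring_nf
    exact e ▸ (h1.sub h2)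
  have hGderiv_nonneg : ∀ x, 0 ≤ 1 / 4 - p * (1 - p) * Real.exp x / (D x) ^ 2 := by
    intro x
    rw [sub_nonneg, div_le_iff₀ (pow_pos (hDpos x) 2)]
    nlinarith [sq_nonneg ((1 - p) - p * Real.exp x), Real.exp_pos x,
      mul_nonneg hp0 (Real.exp_pos x).le, sub_nonneg.mpr hp1]
  have hGmono : Monotone G :=
    monotone_of_deriv_nonneg (fun x => (hGd x).differentiableAt)
      (fun x => (hGd x).deriv ▸ hGderiv_nonneg x)
  have hG0 : G 0 = 0 := by simp [hGdef, hDdef]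
  have hF0 : F 0 = 0 := by simp [hFdef, hDdef]
  have hFdiff : Differentiable ℝ F := fun y => (hFd y).differentiableAt
  have hFnonneg : ∀ x, 0 ≤ F x := by
    intro x
    rcases le_total 0 x with hx | hx
    · have hmono : MonotoneOn F (Set.Ici 0) :=
        monotoneOn_of_deriv_nonneg (convex_Ici 0)
          (hFdiff.continuous.continuousOn)
          (fun y _ => (hFd y).differentiableAt.differentiableWithinAt)
          (fun y hy => by
            rw [(hFd y).deriv, ← hG0]
            exact hGmono (le_of_lt (by simpa using hy)))
      simpa [hF0] using hmono Set.self_mem_Ici hx hx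
    · have hanti : AntitoneOn F (Set.Iic 0) :=
        antitoneOn_of_deriv_nonpos (convex_Iic 0)
          (hFdiff.continuous.continuousOn)
          (fun y _ => (hFd y).differentiableAt.differentiableWithinAt)
          (fun y hy => by
            rw [(hFd y).deriv, ← hG0]
            exact hGmono (le_of_lt (by simpa using hy)))
      simpa [hF0] using hanti hx Set.self_mem_Iic hx
  have key : Real.log (D h) - p * h ≤ h ^ 2 / 8 := by
    have := hFnonneg h
    rw [hFdef] at this
    simp only at this
    linarith
  have hLHS : (1 - p) * Real.exp (-p * h) + p * Real.exp ((1 - p) * h)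
      = Real.exp (Real.log (D h) + -(p * h)) := by
    have e1 : Real.exp ((1 - p) * h) = Real.exp h * Real.exp (-(p * h)) := by
      rw [← Real.exp_add]; ring_nf
    have e2 : (-p * h : ℝ) = -(p * h) := by ring
    rw [e2, e1, Real.exp_add, Real.exp_log (hDpos h), hDdef]
    simp only
    ring
  rw [hLHS]
  exact Real.exp_le_exp.mpr (by linarith)

private lemma finite_hoeffding {m : ℕ} (hm : 0 < m) (d : Fin m → ℝ) {a b : ℝ} (hab : a < b)
    (hd : ∀ i, a ≤ d i ∧ d i ≤ b) (s : ℝ) :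
    ∑ i, Real.exp (s * (d i - (∑ j, d j) / m)) ≤ m * Real.exp (s ^ 2 * (b - a) ^ 2 / 8) := by
  set μ := (∑ j, d j) / m with hμ
  have hm' : (0:ℝ) < m := by exact_mod_cast hm
  have hba : (0:ℝ) < b - a := sub_pos.mpr hab
  have hμa : a ≤ μ := by
    rw [hμ, le_div_iff₀ hm']
    calc (a : ℝ) * m = ∑ _j : Fin m, a := by simp [mul_comm]
    _ ≤ ∑ j, d j := Finset.sum_le_sum fun j _ => (hd j).1
  have hμb : μ ≤ b := by
    rw [hμ, div_le_iff₀ hm']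
    calc ∑ j, d j ≤ ∑ _j : Fin m, b := Finset.sum_le_sum fun j _ => (hd j).2
    _ = b * m := by simp [mul_comm]
  set p := (μ - a) / (b - a) with hp
  have hp0 : 0 ≤ p := div_nonneg (by linarith) hba.le
  have hp1 : p ≤ 1 := (div_le_one hba).mpr (by linarith)
  set h := s * (b - a) with hh
  have key : ∀ i, Real.exp (s * (d i - μ)) ≤
      (b - d i) / (b - a) * Real.exp (s * (a - μ))
        + (d i - a) / (b - a) * Real.exp (s * (b - μ)) := by
    intro i
    have hθ0 : 0 ≤ (b - d i) / (b - a) := div_nonneg (by linarith [(hd i).2]) hba.le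
    have hθ0' : 0 ≤ (d i - a) / (b - a) := div_nonneg (by linarith [(hd i).1]) hba.le
    have hθs : (b - d i) / (b - a) + (d i - a) / (b - a) = 1 := by field_simp; ring
    have := convexOn_exp.2 (Set.mem_univ (s * (a - μ))) (Set.mem_univ (s * (b - μ)))
      hθ0 hθ0' hθs
    simp only [smul_eq_mul] at this
    have harg : (b - d i) / (b - a) * (s * (a - μ)) + (d i - a) / (b - a) * (s * (b - μ))
        = s * (d i - μ) := by field_simp; ring
    rwa [harg] at this
  have ea : s * (a - μ) = -p * h := by rw [hp, hh]; field_simp; ring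
  have eb : s * (b - μ) = (1 - p) * h := by rw [hp, hh]; field_simp; ring
  have e1 : ∑ i, (b - d i) / (b - a) = m * (1 - p) := by
    rw [← Finset.sum_div, Finset.sum_sub_distrib, hp, hμ]
    simp only [Finset.sum_const, Finset.card_univ, Fintype.card_fin, nsmul_eq_mul]
    field_simp
    ring
  have e2 : ∑ i, (d i - a) / (b - a) = m * p := by
    rw [← Finset.sum_div, Finset.sum_sub_distrib, hp, hμ]
    simp only [Finset.sum_const, Finset.card_univ, Fintype.card_fin, nsmul_eq_mul]
    field_simp
  calc ∑ i, Real.exp (s * (d i - μ))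
      ≤ ∑ i, ((b - d i) / (b - a) * Real.exp (s * (a - μ))
          + (d i - a) / (b - a) * Real.exp (s * (b - μ))) :=
        Finset.sum_le_sum fun i _ => key i
    _ = m * ((1 - p) * Real.exp (-p * h) + p * Real.exp ((1 - p) * h)) := by
        rw [Finset.sum_add_distrib, ← Finset.sum_mul, ← Finset.sum_mul, e1, e2, ea, eb]
        ring
    _ ≤ m * Real.exp (h ^ 2 / 8) :=
        mul_le_mul_of_nonneg_left (hoeffding_fn_le hp0 hp1 h) hm'.le
    _ = m * Real.exp (s ^ 2 * (b - a) ^ 2 / 8) := by rw [hh]; ring_nf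

private def consEmb {k m : ℕ} (x : Fin (m + 1)) (h : Fin k ↪ Fin m) :
    Fin (k + 1) ↪ Fin (m + 1) :=
  ⟨Fin.cons x (fun i => x.succAbove (h i)), by
    intro i j hij
    induction i using Fin.cases with
    | zero =>
      induction j using Fin.cases with
      | zero => rfl
      | succ j =>
        simp only [Fin.cons_zero, Fin.cons_succ] at hij
        exact absurd hij.symm (Fin.succAbove_ne x (h j))
    | succ i =>
      induction j using Fin.cases with
      | zero =>
        simp only [Fin.cons_zero, Fin.cons_succ] at hij
        exact absurd hij (Fin.succAbove_ne x (h i))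
      | succ j =>
        simp only [Fin.cons_succ] at hij
        exact congrArg Fin.succ (h.injective (Fin.succAbove_right_injective hij))⟩

private lemma consEmb_zero {k m : ℕ} (x : Fin (m + 1)) (h : Fin k ↪ Fin m) :
    consEmb x h 0 = x := rfl

private lemma consEmb_succ {k m : ℕ} (x : Fin (m + 1)) (h : Fin k ↪ Fin m) (i : Fin k) :
    consEmb x h i.succ = x.succAbove (h i) := rfl

private lemma consEmb_bijective {k m : ℕ} :
    Function.Bijective (fun p : Fin (m + 1) × (Fin k ↪ Fin m) => consEmb p.1 p.2) := by
  constructor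
  · rintro ⟨x, h⟩ ⟨x', h'⟩ hxh
    simp only at hxh
    have hx : x = x' := by
      have := congrArg (fun f : Fin (k + 1) ↪ Fin (m + 1) => f 0) hxh
      simpa [consEmb_zero] using this
    subst hx
    have hh : h = h' := by
      ext i
      have := congrArg (fun f : Fin (k + 1) ↪ Fin (m + 1) => f i.succ) hxh
      simp only [consEmb_succ] at this
      exact congrArg Fin.val (Fin.succAbove_right_injective this)
    rw [hh]
  · intro f
    set x := f 0 with hx
    have hne : ∀ i : Fin k, x ≠ f i.succ :=
      fun i => f.injective.ne (Fin.succ_ne_zero i).symm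
    choose g hg using fun i => Fin.exists_succAbove_eq (hne i).symm
    have hginj : Function.Injective g := by
      intro i j hij
      have : f i.succ = f j.succ := by rw [← hg i, ← hg j, hij]
      exact Fin.succ_injective _ (f.injective this)
    refine ⟨⟨x, ⟨g, hginj⟩⟩, ?_⟩
    ext i
    induction i using Fin.cases with
    | zero => simp [consEmb_zero, hx]
    | succ i => simp [consEmb_succ, hg i]

private lemma sum_emb_succ {k m : ℕ} (F : (Fin (k + 1) ↪ Fin (m + 1)) → ℝ) :
    ∑ f : Fin (k + 1) ↪ Fin (m + 1), F f
      = ∑ x : Fin (m + 1), ∑ h : Fin k ↪ Fin m, F (consEmb x h) := by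
  classical
  calc ∑ f : Fin (k + 1) ↪ Fin (m + 1), F f
      = ∑ p : Fin (m + 1) × (Fin k ↪ Fin m), F (consEmb p.1 p.2) :=
        (Fintype.sum_bijective _ consEmb_bijective _ _ (fun p => rfl)).symm
    _ = ∑ x : Fin (m + 1), ∑ h : Fin k ↪ Fin m, F (consEmb x h) := by
        rw [Fintype.sum_prod_type]

private lemma mgf_bound (a b : ℝ) (hab : a < b) :
    ∀ (k m : ℕ), k ≤ m → 0 < m → ∀ (d : Fin m → ℝ),
      (∀ i, a ≤ d i ∧ d i ≤ b) → ∀ s : ℝ,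
      ∑ f : Fin k ↪ Fin m, Real.exp (s * (∑ i, d (f i) - (k : ℝ) * ((∑ j, d j) / m)))
        ≤ (m.descFactorial k : ℝ) * Real.exp ((k : ℝ) * (s ^ 2 * (b - a) ^ 2 / 8)) := by
  intro k
  induction k with
  | zero =>
    intro m hkm hm d hd s
    classical
    simp [Fintype.card_embedding_eq]
  | succ k ih =>
    intro m hkm hm d hd s
    classical
    obtain ⟨m', rfl⟩ : ∃ m', m = m' + 1 := ⟨m - 1, (Nat.succ_pred_eq_of_pos hm).symm⟩
    rcases Nat.eq_zero_or_pos m' with rfl | hm'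
    · -- m = 1, so k = 0
      have hk0 : k = 0 := Nat.le_zero.mp (Nat.succ_le_succ_iff.mp hkm)
      subst hk0
      have hterm : ∀ f : Fin 1 ↪ Fin 1,
          Real.exp (s * (∑ i : Fin 1, d (f i) - ((0 + 1 : ℕ) : ℝ) * ((∑ j, d j) / (0 + 1 : ℕ)))) = 1 := by
        intro f
        have hf0 : f 0 = 0 := Subsingleton.elim _ _
        simp [Fin.sum_univ_one, hf0]
      rw [Finset.sum_congr rfl (fun f _ => hterm f)]
      have hcard : (Fintype.card (Fin 1 ↪ Fin 1) : ℝ) = 1 := by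
        simp [Fintype.card_embedding_eq]
      simp only [Finset.sum_const, Finset.card_univ, nsmul_eq_mul, mul_one]
      rw [hcard]
      have : (1 : ℝ) ≤ Real.exp (((0 + 1 : ℕ) : ℝ) * (s ^ 2 * (b - a) ^ 2 / 8)) :=
        Real.one_le_exp (by positivity)
      simpa using this
    · -- main case : m = m' + 1, 0 < m', k ≤ m'
      have hkm' : k ≤ m' := Nat.succ_le_succ_iff.mp hkm
      have hm'R : (0 : ℝ) < m' := by exact_mod_cast hm'
      set μ : ℝ := (∑ j, d j) / ((m' + 1 : ℕ) : ℝ) with hμ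
      set s' : ℝ := s * (((m' : ℝ) - k) / m') with hs'
      rw [sum_emb_succ]
      have hsplit : ∀ (x : Fin (m' + 1)) (h : Fin k ↪ Fin m'),
          Real.exp (s * (∑ i, d (consEmb x h i) - ((k + 1 : ℕ) : ℝ) * μ))
            = Real.exp (s' * (d x - μ)) *
              Real.exp (s * (∑ i, d (x.succAbove (h i))
                - (k : ℝ) * ((∑ j, d (x.succAbove j)) / (m' : ℝ)))) := by
        intro x h
        rw [← Real.exp_add]
        congr 1
        have hsum : ∑ i, d (consEmb x h i) = d x + ∑ i, d (x.succAbove (h i)) := by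
          rw [Fin.sum_univ_succ]
          simp [consEmb_zero, consEmb_succ]
        have hsucc : ∑ j, d (x.succAbove j) = (∑ j, d j) - d x := by
          have := Fin.sum_univ_succAbove d x
          linarith
        rw [hsum, hsucc, hs', hμ]
        have hm1 : ((m' + 1 : ℕ) : ℝ) = (m' : ℝ) + 1 := by push_cast; ring
        have hk1 : ((k + 1 : ℕ) : ℝ) = (k : ℝ) + 1 := by push_cast; ring
        rw [hm1, hk1]
        field_simp
        ring
      rw [Finset.sum_congr rfl (fun x _ =>
        Finset.sum_congr rfl (fun h _ => hsplit x h))]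
      have hinner : ∀ x : Fin (m' + 1),
          ∑ h : Fin k ↪ Fin m', Real.exp (s * (∑ i, d (x.succAbove (h i))
              - (k : ℝ) * ((∑ j, d (x.succAbove j)) / (m' : ℝ))))
            ≤ (m'.descFactorial k : ℝ) * Real.exp ((k : ℝ) * (s ^ 2 * (b - a) ^ 2 / 8)) := by
        intro x
        exact ih m' hkm' hm' (fun j => d (x.succAbove j)) (fun j => hd _) s
      set C : ℝ := (m'.descFactorial k : ℝ) * Real.exp ((k : ℝ) * (s ^ 2 * (b - a) ^ 2 / 8))
        with hC
      have hC0 : 0 ≤ C := by positivity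
      calc ∑ x : Fin (m' + 1), ∑ h : Fin k ↪ Fin m',
            Real.exp (s' * (d x - μ)) * Real.exp (s * (∑ i, d (x.succAbove (h i))
              - (k : ℝ) * ((∑ j, d (x.succAbove j)) / (m' : ℝ))))
          ≤ ∑ x : Fin (m' + 1), Real.exp (s' * (d x - μ)) * C := by
            refine Finset.sum_le_sum fun x _ => ?_
            rw [← Finset.mul_sum]
            exact mul_le_mul_of_nonneg_left (hinner x) (Real.exp_pos _).le
        _ = C * ∑ x : Fin (m' + 1), Real.exp (s' * (d x - μ)) := by
            rw [← Finset.sum_mul]; ring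
        _ ≤ C * (((m' + 1 : ℕ) : ℝ) * Real.exp (s' ^ 2 * (b - a) ^ 2 / 8)) := by
            refine mul_le_mul_of_nonneg_left ?_ hC0
            exact finite_hoeffding (Nat.succ_pos m') d hab hd s'
        _ ≤ C * (((m' + 1 : ℕ) : ℝ) * Real.exp (s ^ 2 * (b - a) ^ 2 / 8)) := by
            refine mul_le_mul_of_nonneg_left (mul_le_mul_of_nonneg_left
              (Real.exp_le_exp.mpr ?_) (by positivity)) hC0
            have hc0 : 0 ≤ ((m' : ℝ) - k) / m' := by
              apply div_nonneg _ hm'R.le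
              have : (k : ℝ) ≤ m' := by exact_mod_cast hkm'
              linarith
            have hc1 : ((m' : ℝ) - k) / m' ≤ 1 := by
              rw [div_le_one hm'R]
              have : (0 : ℝ) ≤ k := Nat.cast_nonneg k
              linarith
            have hcsq : (((m' : ℝ) - k) / m') ^ 2 ≤ 1 := by nlinarith
            have : s' ^ 2 ≤ s ^ 2 := by
              rw [hs', mul_pow]
              calc s ^ 2 * (((m' : ℝ) - k) / m') ^ 2 ≤ s ^ 2 * 1 :=
                mul_le_mul_of_nonneg_left hcsq (sq_nonneg s)
              _ = s ^ 2 := mul_one _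
            nlinarith [sq_nonneg (b - a)]
        _ = ((m' + 1 : ℕ).descFactorial (k + 1) : ℝ)
              * Real.exp (((k + 1 : ℕ) : ℝ) * (s ^ 2 * (b - a) ^ 2 / 8)) := by
            rw [hC, Nat.succ_descFactorial_succ]
            push_cast
            rw [show ((k : ℝ) + 1) * (s ^ 2 * (b - a) ^ 2 / 8)
              = (k : ℝ) * (s ^ 2 * (b - a) ^ 2 / 8) + s ^ 2 * (b - a) ^ 2 / 8 by ring,
              Real.exp_add]
            ring

private lemma chernoff_tail (N n : ℕ) (hn : 0 < n) (hnN : n ≤ N) (c : Fin N → ℝ) (a b : ℝ)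
    (hab : a < b) (hc : ∀ i, a ≤ c i ∧ c i ≤ b) (t : ℝ) (ht : 0 < t) :
    (((Finset.univ : Finset (Fin n ↪ Fin N)).filter
        (fun f => (n : ℝ) * t ≤ ∑ i, c (f i) - (n : ℝ) * ((∑ j, c j) / N))).card : ℝ)
      ≤ (N.descFactorial n : ℝ) * Real.exp (-2 * n * t ^ 2 / (b - a) ^ 2) := by
  classical
  have hba : (0 : ℝ) < b - a := sub_pos.mpr hab
  set s : ℝ := 4 * t / (b - a) ^ 2 with hs
  have hs0 : 0 < s := by positivity
  have hN : 0 < N := lt_of_lt_of_le hn hnN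
  have hmgf := mgf_bound a b hab n N hnN hN c hc s
  set A := (Finset.univ : Finset (Fin n ↪ Fin N)).filter
      (fun f => (n : ℝ) * t ≤ ∑ i, c (f i) - (n : ℝ) * ((∑ j, c j) / N)) with hA
  have step1 : (A.card : ℝ) * Real.exp (s * ((n : ℝ) * t))
      ≤ ∑ f : Fin n ↪ Fin N,
          Real.exp (s * (∑ i, c (f i) - (n : ℝ) * ((∑ j, c j) / N))) := by
    calc (A.card : ℝ) * Real.exp (s * ((n : ℝ) * t))
        = ∑ _f ∈ A, Real.exp (s * ((n : ℝ) * t)) := by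
          rw [Finset.sum_const, nsmul_eq_mul]
      _ ≤ ∑ f ∈ A, Real.exp (s * (∑ i, c (f i) - (n : ℝ) * ((∑ j, c j) / N))) := by
          refine Finset.sum_le_sum fun f hf => ?_
          have := (Finset.mem_filter.mp hf).2
          exact Real.exp_le_exp.mpr (mul_le_mul_of_nonneg_left this hs0.le)
      _ ≤ ∑ f : Fin n ↪ Fin N,
            Real.exp (s * (∑ i, c (f i) - (n : ℝ) * ((∑ j, c j) / N))) :=
          Finset.sum_le_sum_of_subset_of_nonneg (Finset.filter_subset _ _)
            (fun f _ _ => (Real.exp_pos _).le)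
  have h2 : (A.card : ℝ)
      ≤ (N.descFactorial n : ℝ) * Real.exp ((n : ℝ) * (s ^ 2 * (b - a) ^ 2 / 8))
          / Real.exp (s * ((n : ℝ) * t)) := by
    rw [le_div_iff₀ (Real.exp_pos _)]
    exact le_trans step1 hmgf
  have h3 : (N.descFactorial n : ℝ) * Real.exp ((n : ℝ) * (s ^ 2 * (b - a) ^ 2 / 8))
      / Real.exp (s * ((n : ℝ) * t))
      = (N.descFactorial n : ℝ)
          * Real.exp ((n : ℝ) * (s ^ 2 * (b - a) ^ 2 / 8) - s * ((n : ℝ) * t)) := by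
    rw [mul_div_assoc, Real.exp_sub]
  have h4 : (n : ℝ) * (s ^ 2 * (b - a) ^ 2 / 8) - s * ((n : ℝ) * t)
      = -2 * n * t ^ 2 / (b - a) ^ 2 := by
    rw [hs]
    field_simp
    ring
  rw [h3, h4] at h2
  exact h2

open Classical in
/-- Hoeffding's inequality for sampling without replacement from a finite population:
if `X₁,…,Xₙ` are sampled without replacement from values `c₁,…,c_N` with `a < cᵢ < b`,
and `μ = (1/N) ∑ᵢ cᵢ`, then for all `t > 0`,
`P(|(1/n) ∑ᵢ Xᵢ − μ| ≥ t) ≤ 2 exp(−2nt²/(b−a)²)`, where the probability is the uniform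
distribution over ordered samples of `n` distinct elements. -/
theorem hoeffding_finite_population (N n : ℕ) (hn : 0 < n) (hnN : n ≤ N)
    (c : Fin N → ℝ) (a b : ℝ) (hab : ∀ i, a < c i ∧ c i < b) (t : ℝ) (ht : 0 < t) :
    ((((Finset.univ : Finset (Fin n ↪ Fin N))).filter
        (fun f => t ≤ |(1 / (n : ℝ)) * ∑ i, c (f i) - (1 / (N : ℝ)) * ∑ i, c i|)).card : ℝ) /
        (Fintype.card (Fin n ↪ Fin N) : ℝ) ≤
      2 * Real.exp (-2 * n * t ^ 2 / (b - a) ^ 2) := by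
  classical
  have hN : 0 < N := lt_of_lt_of_le hn hnN
  have hab' : a < b := lt_trans (hab ⟨0, hN⟩).1 (hab ⟨0, hN⟩).2
  have hc : ∀ i, a ≤ c i ∧ c i ≤ b := fun i => ⟨(hab i).1.le, (hab i).2.le⟩
  have hnR : (0 : ℝ) < n := by exact_mod_cast hn
  have h1 := chernoff_tail N n hn hnN c a b hab' hc t ht
  have h2 := chernoff_tail N n hn hnN (fun j => -c j) (-b) (-a) (by linarith)
    (fun i => by
      exact ⟨by linarith [(hc i).2], by linarith [(hc i).1]⟩) t ht
  have hba2 : (-a - -b : ℝ) = b - a := by ring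
  rw [hba2] at h2
  set Q1 : (Fin n ↪ Fin N) → Prop :=
    fun f => (n : ℝ) * t ≤ ∑ i, c (f i) - (n : ℝ) * ((∑ j, c j) / N) with hQ1
  set Q2 : (Fin n ↪ Fin N) → Prop :=
    fun f => (n : ℝ) * t ≤ ∑ i, -c (f i) - (n : ℝ) * ((∑ j, -c j) / N) with hQ2
  have hsub : ((Finset.univ : Finset (Fin n ↪ Fin N))).filter
      (fun f => t ≤ |(1 / (n : ℝ)) * ∑ i, c (f i) - (1 / (N : ℝ)) * ∑ i, c i|)
      ⊆ (Finset.univ.filter Q1) ∪ (Finset.univ.filter Q2) := by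
    intro f hf
    have hP := (Finset.mem_filter.mp hf).2
    rcases le_abs.mp hP with h | h
    · refine Finset.mem_union_left _ (Finset.mem_filter.mpr ⟨Finset.mem_univ f, ?_⟩)
      rw [hQ1]
      have hNR : (0 : ℝ) < N := by exact_mod_cast hN
      have := mul_le_mul_of_nonneg_left h hnR.le
      calc (n : ℝ) * t ≤ (n : ℝ) * ((1 / (n : ℝ)) * ∑ i, c (f i) - (1 / (N : ℝ)) * ∑ i, c i) :=
            this
        _ = ∑ i, c (f i) - (n : ℝ) * ((∑ j, c j) / N) := by
            field_simp
    · refine Finset.mem_union_right _ (Finset.mem_filter.mpr ⟨Finset.mem_univ f, ?_⟩)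
      rw [hQ2]
      have hNR : (0 : ℝ) < N := by exact_mod_cast hN
      have := mul_le_mul_of_nonneg_left h hnR.le
      calc (n : ℝ) * t
          ≤ (n : ℝ) * -((1 / (n : ℝ)) * ∑ i, c (f i) - (1 / (N : ℝ)) * ∑ i, c i) := this
        _ = ∑ i, -c (f i) - (n : ℝ) * ((∑ j, -c j) / N) := by
            rw [Finset.sum_neg_distrib, Finset.sum_neg_distrib]
            field_simp
            ring
  have hcardle : ((((Finset.univ : Finset (Fin n ↪ Fin N))).filter
      (fun f => t ≤ |(1 / (n : ℝ)) * ∑ i, c (f i) - (1 / (N : ℝ)) * ∑ i, c i|)).card : ℝ)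
      ≤ ((Finset.univ.filter Q1).card : ℝ) + ((Finset.univ.filter Q2).card : ℝ) := by
    have := le_trans (Finset.card_le_card hsub) (Finset.card_union_le _ _)
    exact_mod_cast this
  have hcardΩ : (Fintype.card (Fin n ↪ Fin N) : ℝ) = (N.descFactorial n : ℝ) := by
    simp [Fintype.card_embedding_eq]
  have hpos : (0 : ℝ) < (N.descFactorial n : ℝ) := by
    rw [← hcardΩ]
    exact_mod_cast Fintype.card_pos_iff.mpr ⟨Fin.castLEEmb hnN⟩
  rw [hcardΩ, div_le_iff₀ hpos]
  calc ((((Finset.univ : Finset (Fin n ↪ Fin N))).filter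
      (fun f => t ≤ |(1 / (n : ℝ)) * ∑ i, c (f i) - (1 / (N : ℝ)) * ∑ i, c i|)).card : ℝ)
      ≤ ((Finset.univ.filter Q1).card : ℝ) + ((Finset.univ.filter Q2).card : ℝ) := hcardle
    _ ≤ (N.descFactorial n : ℝ) * Real.exp (-2 * n * t ^ 2 / (b - a) ^ 2)
        + (N.descFactorial n : ℝ) * Real.exp (-2 * n * t ^ 2 / (b - a) ^ 2) := by
        exact add_le_add h1 h2
    _ = 2 * Real.exp (-2 * n * t ^ 2 / (b - a) ^ 2) * (N.descFactorial n : ℝ) := by ring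
end

section
/- For every real q > 4 and γ = q^((q−1)/2), if Z, Z' are i.i.d. Poisson random variables with parameter γ^(1/(q−1))/2 = √q/2, then γ^(−q/(q−1)) E[|Z − Z'|^q] ≤ (2√(2e) · √q)^q. -/
open MeasureTheory ProbabilityTheory Real NNReal

/-- Pointwise bound `x^q ≤ (q/e)^q e^x` for `x ≥ 0`, `q > 0`. -/
lemma aux_rpow_le_exp {q x : ℝ} (hq : 0 < q) (hx : 0 ≤ x) :
    x ^ q ≤ (q / Real.exp 1) ^ q * Real.exp x := by
  have hq0 : q ≠ 0 := hq.ne'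
  have h1 : x / q ≤ Real.exp (x / q - 1) := by
    have := Real.add_one_le_exp (x / q - 1); linarith
  have h2 : (x / q) ^ q ≤ Real.exp (x / q - 1) ^ q :=
    Real.rpow_le_rpow (by positivity) h1 hq.le
  have hx' : x = q * (x / q) := by field_simp
  have hexp : (x / q - 1) * q = x - q := by field_simp
  calc x ^ q = (q * (x / q)) ^ q := by rw [← hx']
    _ = q ^ q * (x / q) ^ q := Real.mul_rpow hq.le (by positivity)
    _ ≤ q ^ q * Real.exp (x / q - 1) ^ q :=
        mul_le_mul_of_nonneg_left h2 (by positivity)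
    _ = q ^ q * Real.exp (x - q) := by rw [← Real.exp_mul, hexp]
    _ = (q / Real.exp 1) ^ q * Real.exp x := by
        rw [Real.div_rpow hq.le (Real.exp_pos 1).le, Real.exp_one_rpow,
          Real.exp_sub]
        ring

/-- Exponential moment of the Poisson distribution. -/
lemma aux_poisson_exp_sum (r : ℝ≥0) :
    ∑' n : ℕ, ENNReal.ofReal (Real.exp n) * poissonPMF r n =
      ENNReal.ofReal (Real.exp ((r : ℝ) * (Real.exp 1 - 1))) := by
  have hterm : ∀ n : ℕ, ENNReal.ofReal (Real.exp n) * poissonPMF r n =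
      ENNReal.ofReal (Real.exp (-(r : ℝ)) * ((r : ℝ) * Real.exp 1) ^ n / (n.factorial : ℝ)) := by
    intro n
    show ENNReal.ofReal (Real.exp n) * ENNReal.ofReal (poissonPMFReal r n) = _
    rw [← ENNReal.ofReal_mul (Real.exp_pos _).le]
    congr 1
    unfold poissonPMFReal
    rw [mul_pow, ← Real.exp_one_pow]
    ring
  simp_rw [hterm]
  have hsumm : Summable
      (fun n : ℕ => Real.exp (-(r : ℝ)) * ((r : ℝ) * Real.exp 1) ^ n / (n.factorial : ℝ)) := by
    simp_rw [mul_div_assoc]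
    exact (Real.summable_pow_div_factorial _).mul_left _
  rw [← ENNReal.ofReal_tsum_of_nonneg (fun n => by positivity) hsumm]
  congr 1
  have hexp : HasSum (fun n : ℕ => ((r : ℝ) * Real.exp 1) ^ n / (n.factorial : ℝ))
      (Real.exp ((r : ℝ) * Real.exp 1)) := by
    rw [Real.exp_eq_exp_ℝ]
    exact NormedSpace.expSeries_div_hasSum_exp _
  have htot := (hexp.mul_left (Real.exp (-(r : ℝ)))).tsum_eq
  simp_rw [mul_div_assoc]
  rw [htot, ← Real.exp_add]
  congr 1
  ring

/-- Bound on the optimal Rosenthal constant for `q > 4` at `γ = q^((q−1)/2)`: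
if `Z, Z'` are i.i.d. Poisson with parameter `γ^(1/(q−1))/2 = √q/2`, then
`γ^(−q/(q−1)) E[|Z − Z'|^q] ≤ (2√(2e) √q)^q`. -/
theorem rosenthal_constant_bound (q : ℝ) (hq : 4 < q) :
    (q ^ ((q - 1) / 2)) ^ (-(q / (q - 1))) *
        ∫ p : ℕ × ℕ, |(p.1 : ℝ) - (p.2 : ℝ)| ^ q
          ∂((poissonMeasure (Real.toNNReal (Real.sqrt q / 2))).prod
            (poissonMeasure (Real.toNNReal (Real.sqrt q / 2)))) ≤
      (2 * Real.sqrt (2 * Real.exp 1) * Real.sqrt q) ^ q := by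
  have hq0 : 0 < q := by linarith
  set r : ℝ≥0 := Real.toNNReal (Real.sqrt q / 2) with hr
  have hrval : (r : ℝ) = Real.sqrt q / 2 := by
    rw [hr, Real.coe_toNNReal _ (by positivity)]
  set μ : Measure ℕ := poissonMeasure r with hμ
  set C : ℝ := (q / Real.exp 1) ^ q with hC
  have hC0 : 0 ≤ C := by positivity
  have hsing : ∀ n : ℕ, μ {n} = poissonPMF r n := fun n => by
    rw [hμ, poissonMeasure_singleton, ← poissonPMFReal_ofReal_eq_poissonPMF]; rfl
  set B : ℝ := C * (Real.exp ((r : ℝ) * (Real.exp 1 - 1))) ^ 2 with hB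
  have hB0 : 0 ≤ B := by positivity
  have hlint : ∫⁻ p : ℕ × ℕ, ENNReal.ofReal (|(p.1 : ℝ) - (p.2 : ℝ)| ^ q) ∂(μ.prod μ) ≤
      ENNReal.ofReal B := by
    rw [lintegral_countable']
    have hptwise : ∀ p : ℕ × ℕ,
        ENNReal.ofReal (|(p.1 : ℝ) - (p.2 : ℝ)| ^ q) * (μ.prod μ) {p} ≤
          ENNReal.ofReal C * ((ENNReal.ofReal (Real.exp p.1) * μ {p.1}) *
            (ENNReal.ofReal (Real.exp p.2) * μ {p.2})) := by
      intro ⟨m, n⟩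
      have hprod : (μ.prod μ) {(m, n)} = μ {m} * μ {n} := by
        rw [← Set.singleton_prod_singleton, Measure.prod_prod]
      have habs : |(m : ℝ) - (n : ℝ)| ≤ (m : ℝ) + n := by
        rw [abs_le]; constructor <;> [nlinarith [Nat.cast_nonneg (α := ℝ) m,
          Nat.cast_nonneg (α := ℝ) n]; nlinarith [Nat.cast_nonneg (α := ℝ) m,
          Nat.cast_nonneg (α := ℝ) n]]
      have h1 : |(m : ℝ) - (n : ℝ)| ^ q ≤ C * (Real.exp m * Real.exp n) := by
        calc |(m : ℝ) - (n : ℝ)| ^ q ≤ ((m : ℝ) + n) ^ q :=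
              Real.rpow_le_rpow (abs_nonneg _) habs hq0.le
          _ ≤ C * Real.exp ((m : ℝ) + n) := aux_rpow_le_exp hq0 (by positivity)
          _ = C * (Real.exp m * Real.exp n) := by rw [Real.exp_add]
      calc ENNReal.ofReal (|(m : ℝ) - (n : ℝ)| ^ q) * (μ.prod μ) {(m, n)}
          ≤ ENNReal.ofReal (C * (Real.exp m * Real.exp n)) * (μ {m} * μ {n}) := by
            rw [hprod]
            exact mul_le_mul_left (ENNReal.ofReal_le_ofReal h1) _
        _ = ENNReal.ofReal C * ((ENNReal.ofReal (Real.exp m) * μ {m}) *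
              (ENNReal.ofReal (Real.exp n) * μ {n})) := by
            rw [ENNReal.ofReal_mul hC0, ENNReal.ofReal_mul (Real.exp_pos _).le]
            ring
    calc ∑' p : ℕ × ℕ, ENNReal.ofReal (|(p.1 : ℝ) - (p.2 : ℝ)| ^ q) * (μ.prod μ) {p}
        ≤ ∑' p : ℕ × ℕ, ENNReal.ofReal C * ((ENNReal.ofReal (Real.exp p.1) * μ {p.1}) *
            (ENNReal.ofReal (Real.exp p.2) * μ {p.2})) := ENNReal.tsum_le_tsum hptwise
      _ = ENNReal.ofReal C * ((∑' m : ℕ, ENNReal.ofReal (Real.exp m) * μ {m}) *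
            (∑' n : ℕ, ENNReal.ofReal (Real.exp n) * μ {n})) := by
          rw [ENNReal.tsum_mul_left, ENNReal.tsum_prod']
          congr 1
          rw [← ENNReal.tsum_mul_right]
          exact tsum_congr fun m => by rw [← ENNReal.tsum_mul_left]
      _ = ENNReal.ofReal B := by
          have hs : (∑' n : ℕ, ENNReal.ofReal (Real.exp n) * μ {n}) =
              ENNReal.ofReal (Real.exp ((r : ℝ) * (Real.exp 1 - 1))) := by
            exact (tsum_congr fun n => by rw [hsing n]).trans (aux_poisson_exp_sum r)
          rw [hs, hB, ENNReal.ofReal_mul hC0, sq,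
            ENNReal.ofReal_mul (Real.exp_pos _).le]
  have hint : ∫ p : ℕ × ℕ, |(p.1 : ℝ) - (p.2 : ℝ)| ^ q ∂(μ.prod μ) ≤ B := by
    rw [integral_eq_lintegral_of_nonneg_ae
      (Filter.Eventually.of_forall fun p => by positivity)
      (Measurable.aestronglyMeasurable (by measurability))]
    exact ENNReal.toReal_le_of_le_ofReal hB0 hlint
  have hint0 : 0 ≤ ∫ p : ℕ × ℕ, |(p.1 : ℝ) - (p.2 : ℝ)| ^ q ∂(μ.prod μ) :=
    integral_nonneg fun p => by positivity
  -- the prefactor equals q ^ (-(q/2))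
  have hq1 : q - 1 ≠ 0 := by linarith
  have hA : (q ^ ((q - 1) / 2)) ^ (-(q / (q - 1))) = q ^ (-(q / 2)) := by
    rw [← Real.rpow_mul hq0.le]
    congr 1
    field_simp
  have hA0 : 0 ≤ q ^ (-(q / 2)) := by positivity
  -- √q ≥ 2
  have hsq : (2 : ℝ) ≤ Real.sqrt q := by
    nlinarith [Real.sq_sqrt hq0.le, Real.sqrt_nonneg q]
  -- exponential factor bound: exp(r(e-1))^2 = exp(√q (e-1)) ≤ exp q
  have hexpfac : (Real.exp ((r : ℝ) * (Real.exp 1 - 1))) ^ 2 ≤ Real.exp q := by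
    rw [← Real.exp_nat_mul]
    apply Real.exp_le_exp.mpr
    rw [hrval]
    have he : Real.exp 1 ≤ 3 := by
      have := Real.exp_one_lt_d9; linarith
    nlinarith [Real.sqrt_nonneg q, Real.sq_sqrt hq0.le]
  -- so q^(-(q/2)) * B ≤ q^(q/2)
  have hmid : q ^ (-(q / 2)) * B ≤ q ^ (q / 2) := by
    have h1 : B ≤ (q / Real.exp 1) ^ q * Real.exp q := by
      rw [hB, hC]
      exact mul_le_mul_of_nonneg_left hexpfac (by positivity)
    have h2 : (q / Real.exp 1) ^ q * Real.exp q = q ^ q := by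
      rw [Real.div_rpow hq0.le (Real.exp_pos 1).le, Real.exp_one_rpow]
      field_simp
    have h3 : q ^ (-(q / 2)) * q ^ q = q ^ (q / 2) := by
      rw [← Real.rpow_add hq0]
      congr 1
      ring
    calc q ^ (-(q / 2)) * B ≤ q ^ (-(q / 2)) * ((q / Real.exp 1) ^ q * Real.exp q) :=
          mul_le_mul_of_nonneg_left h1 hA0
      _ = q ^ (q / 2) := by rw [h2, h3]
  -- and q^(q/2) ≤ RHS
  have hrhs : q ^ (q / 2) ≤ (2 * Real.sqrt (2 * Real.exp 1) * Real.sqrt q) ^ q := by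
    have hsq' : Real.sqrt q ^ q = q ^ (q / 2) := by
      rw [Real.sqrt_eq_rpow, ← Real.rpow_mul hq0.le]
      congr 1
      ring
    have h1 : (1 : ℝ) ≤ 2 * Real.sqrt (2 * Real.exp 1) := by
      nlinarith [Real.sqrt_nonneg (2 * Real.exp 1),
        Real.sq_sqrt (by positivity : (0:ℝ) ≤ 2 * Real.exp 1), Real.exp_pos 1,
        Real.add_one_le_exp (1 : ℝ)]
    have h2 : Real.sqrt q ≤ 2 * Real.sqrt (2 * Real.exp 1) * Real.sqrt q := by
      nlinarith [Real.sqrt_nonneg q]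
    calc q ^ (q / 2) = Real.sqrt q ^ q := hsq'.symm
      _ ≤ (2 * Real.sqrt (2 * Real.exp 1) * Real.sqrt q) ^ q :=
          Real.rpow_le_rpow (Real.sqrt_nonneg q) h2 hq0.le
  calc (q ^ ((q - 1) / 2)) ^ (-(q / (q - 1))) *
        ∫ p : ℕ × ℕ, |(p.1 : ℝ) - (p.2 : ℝ)| ^ q ∂(μ.prod μ)
      = q ^ (-(q / 2)) * ∫ p : ℕ × ℕ, |(p.1 : ℝ) - (p.2 : ℝ)| ^ q ∂(μ.prod μ) := by rw [hA]
    _ ≤ q ^ (-(q / 2)) * B := mul_le_mul_of_nonneg_left hint hA0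
    _ ≤ q ^ (q / 2) := hmid
    _ ≤ (2 * Real.sqrt (2 * Real.exp 1) * Real.sqrt q) ^ q := hrhs
end
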